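/- arXiv:1508.03105 — 9 statements merged into one kernel-verified Lean document; each statement's English description precedes it below -/
import Mathlib

section
/- Let α > 0, let a < b be real numbers, let u : [a,b] → ℝ be continuous, and let B_a, B_b be arbitrary real constants. Define w(x) = (α/2) ∫_a^b e^{−α|x−y|} u(y) dy + B_a e^{−α(x−a)} + B_b e^{−α(b−x)}. Then w is twice continuously differentiable on the open interval (a,b) and satisfies the modified Helmholtz equation w(x) − w''(x)/α² = u(x) for all x ∈ (a,b). -/
open Real Set intervalIntegral

/-- The modified Helmholtz inverse `w = L⁻¹[u]`, built from the Green's function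
`(α/2) e^{-α|x-y|}` plus homogeneous solutions, is twice continuously differentiable
on `(a,b)` and satisfies `w - w''/α² = u` there. -/
theorem greens_function_inverts_modified_helmholtz
    (α a b : ℝ) (hα : 0 < α) (hab : a < b)
    (u : ℝ → ℝ) (hu : ContinuousOn u (Set.Icc a b))
    (Ba Bb : ℝ) (w : ℝ → ℝ)
    (hw : ∀ x : ℝ, w x =
      (α / 2) * (∫ y in a..b, Real.exp (-α * |x - y|) * u y)
        + Ba * Real.exp (-α * (x - a)) + Bb * Real.exp (-α * (b - x))) :
    ContDiffOn ℝ 2 w (Set.Ioo a b) ∧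
      ∀ x ∈ Set.Ioo a b, w x - deriv (deriv w) x / α ^ 2 = u x := by
  have hα2 : (α : ℝ) ^ 2 ≠ 0 := pow_ne_zero _ (ne_of_gt hα)
  set f : ℝ → ℝ := fun y => Real.exp (α * y) * u y with hfdef
  set g : ℝ → ℝ := fun y => Real.exp (-(α * y)) * u y with hgdef
  have hfc : ContinuousOn f (Set.Icc a b) :=
    ((Real.continuous_exp.comp (continuous_const.mul continuous_id)).continuousOn).mul hu
  have hgc : ContinuousOn g (Set.Icc a b) :=
    ((Real.continuous_exp.comp ((continuous_const.mul continuous_id).neg)).continuousOn).mul hu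
  set F : ℝ → ℝ := fun x => ∫ y in a..x, f y with hFdef
  set G : ℝ → ℝ := fun x => ∫ y in x..b, g y with hGdef
  set v : ℝ → ℝ := fun t => (α / 2) * (Real.exp (-(α * t)) * F t + Real.exp (α * t) * G t)
      + Ba * Real.exp (-α * (t - a)) + Bb * Real.exp (-α * (b - t)) with hvdef
  set W1 : ℝ → ℝ := fun t => (α ^ 2 / 2) * (Real.exp (α * t) * G t - Real.exp (-(α * t)) * F t)
      + Ba * (-α * Real.exp (-α * (t - a))) + Bb * (α * Real.exp (-α * (b - t))) with hW1def
  set W2 : ℝ → ℝ := fun t => α ^ 2 * (v t - u t) with hW2def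
  -- subinterval inclusions
  have hsub1 : ∀ x ∈ Set.Icc a b, Set.uIcc a x ⊆ Set.Icc a b := by
    intro x hx
    rw [Set.uIcc_of_le hx.1]
    exact Set.Icc_subset_Icc le_rfl hx.2
  have hsub2 : ∀ x ∈ Set.Icc a b, Set.uIcc x b ⊆ Set.Icc a b := by
    intro x hx
    rw [Set.uIcc_of_le hx.2]
    exact Set.Icc_subset_Icc hx.1 le_rfl
  -- w = v on Icc a b
  have hwv : ∀ x ∈ Set.Icc a b, w x = v x := by
    intro x hx
    have hkc : ContinuousOn (fun y => Real.exp (-α * |x - y|) * u y) (Set.Icc a b) :=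
      ((Real.continuous_exp.comp
        (continuous_const.mul (continuous_const.sub continuous_id).abs)).continuousOn).mul hu
    have h1 : ∫ y in a..x, Real.exp (-α * |x - y|) * u y = Real.exp (-(α * x)) * F x := by
      rw [hFdef, ← intervalIntegral.integral_const_mul]
      apply intervalIntegral.integral_congr
      intro y hy
      have hy' := hsub1 x hx hy
      rw [Set.uIcc_of_le hx.1] at hy
      have habs : |x - y| = x - y := abs_of_nonneg (by linarith [hy.2])
      show Real.exp (-α * |x - y|) * u y = Real.exp (-(α * x)) * f y
      rw [hfdef, habs, show -α * (x - y) = -(α * x) + α * y by ring, Real.exp_add]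
      ring
    have h2 : ∫ y in x..b, Real.exp (-α * |x - y|) * u y = Real.exp (α * x) * G x := by
      rw [hGdef, ← intervalIntegral.integral_const_mul]
      apply intervalIntegral.integral_congr
      intro y hy
      rw [Set.uIcc_of_le hx.2] at hy
      have habs : |x - y| = y - x := by
        rw [abs_of_nonpos (by linarith [hy.1])]; ring
      show Real.exp (-α * |x - y|) * u y = Real.exp (α * x) * g y
      rw [hgdef, habs, show -α * (y - x) = α * x + -(α * y) by ring, Real.exp_add]
      ring
    have hadd : (∫ y in a..x, Real.exp (-α * |x - y|) * u y)
        + (∫ y in x..b, Real.exp (-α * |x - y|) * u y)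
        = ∫ y in a..b, Real.exp (-α * |x - y|) * u y :=
      intervalIntegral.integral_add_adjacent_intervals
        ((hkc.mono (hsub1 x hx)).intervalIntegrable)
        ((hkc.mono (hsub2 x hx)).intervalIntegrable)
    rw [hw x, hvdef, ← hadd, h1, h2]
  -- derivatives of F and G on Ioo
  have hFG : ∀ x ∈ Set.Ioo a b, HasDerivAt F (f x) x ∧ HasDerivAt G (-(g x)) x := by
    intro x hx
    have hxI : x ∈ Set.Icc a b := Set.Ioo_subset_Icc_self hx
    have hnx : Set.Icc a b ∈ nhds x := Icc_mem_nhds hx.1 hx.2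
    constructor
    · exact intervalIntegral.integral_hasDerivAt_right
        ((hfc.mono (hsub1 x hxI)).intervalIntegrable)
        (ContinuousOn.stronglyMeasurableAtFilter isOpen_Ioo
          (hfc.mono Set.Ioo_subset_Icc_self) x hx)
        (hfc.continuousAt hnx)
    · exact intervalIntegral.integral_hasDerivAt_left
        ((hgc.mono (hsub2 x hxI)).intervalIntegrable)
        (ContinuousOn.stronglyMeasurableAtFilter isOpen_Ioo
          (hgc.mono Set.Ioo_subset_Icc_self) x hx)
        (hgc.continuousAt hnx)
  -- first derivative of v
  have hv' : ∀ x ∈ Set.Ioo a b, HasDerivAt v (W1 x) x := by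
    intro x hx
    obtain ⟨hF', hG'⟩ := hFG x hx
    have h1 : HasDerivAt (fun t : ℝ => Real.exp (-(α * t))) (-α * Real.exp (-(α * x))) x := by
      have : HasDerivAt (fun t : ℝ => -(α * t)) (-α) x := by
        simpa [Pi.neg_def] using ((hasDerivAt_id x).const_mul α).neg
      simpa [mul_comm] using this.exp
    have h2 : HasDerivAt (fun t : ℝ => Real.exp (α * t)) (α * Real.exp (α * x)) x := by
      have : HasDerivAt (fun t : ℝ => α * t) α x := by
        simpa using (hasDerivAt_id x).const_mul α
      simpa [mul_comm] using this.exp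
    have h3 : HasDerivAt (fun t : ℝ => Real.exp (-α * (t - a))) (-α * Real.exp (-α * (x - a))) x := by
      have : HasDerivAt (fun t : ℝ => -α * (t - a)) (-α) x := by
        simpa using ((hasDerivAt_id x).sub_const a).const_mul (-α)
      simpa [mul_comm] using this.exp
    have h4 : HasDerivAt (fun t : ℝ => Real.exp (-α * (b - t))) (α * Real.exp (-α * (b - x))) x := by
      have : HasDerivAt (fun t : ℝ => -α * (b - t)) α x := by
        have := ((hasDerivAt_id x).const_sub b).const_mul (-α)
        simpa using this
      simpa [mul_comm] using this.exp
    have hcomb := ((((h1.mul hF').add (h2.mul hG')).const_mul (α / 2)).add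
      (h3.const_mul Ba)).add (h4.const_mul Bb)
    refine hcomb.congr_deriv ?_
    simp only [hW1def, hfdef, hgdef]
    ring
  -- second derivative: derivative of W1
  have hW1' : ∀ x ∈ Set.Ioo a b, HasDerivAt W1 (W2 x) x := by
    intro x hx
    obtain ⟨hF', hG'⟩ := hFG x hx
    have h1 : HasDerivAt (fun t : ℝ => Real.exp (-(α * t))) (-α * Real.exp (-(α * x))) x := by
      have : HasDerivAt (fun t : ℝ => -(α * t)) (-α) x := by
        simpa [Pi.neg_def] using ((hasDerivAt_id x).const_mul α).neg
      simpa [mul_comm] using this.exp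
    have h2 : HasDerivAt (fun t : ℝ => Real.exp (α * t)) (α * Real.exp (α * x)) x := by
      have : HasDerivAt (fun t : ℝ => α * t) α x := by
        simpa using (hasDerivAt_id x).const_mul α
      simpa [mul_comm] using this.exp
    have h3 : HasDerivAt (fun t : ℝ => Real.exp (-α * (t - a))) (-α * Real.exp (-α * (x - a))) x := by
      have : HasDerivAt (fun t : ℝ => -α * (t - a)) (-α) x := by
        simpa using ((hasDerivAt_id x).sub_const a).const_mul (-α)
      simpa [mul_comm] using this.exp
    have h4 : HasDerivAt (fun t : ℝ => Real.exp (-α * (b - t))) (α * Real.exp (-α * (b - x))) x := by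
      have : HasDerivAt (fun t : ℝ => -α * (b - t)) α x := by
        have := ((hasDerivAt_id x).const_sub b).const_mul (-α)
        simpa using this
      simpa [mul_comm] using this.exp
    have hcomb := ((((h2.mul hG').sub (h1.mul hF')).const_mul (α ^ 2 / 2)).add
      ((h3.const_mul (-α)).const_mul Ba)).add ((h4.const_mul α).const_mul Bb)
    have key1 : Real.exp (-(α * x)) * Real.exp (α * x) = 1 := by
      rw [← Real.exp_add]; simp
    refine hcomb.congr_deriv ?_
    simp only [hW2def, hvdef, hfdef, hgdef]
    linear_combination (-(α ^ 2 * u x)) * key1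
  -- w eventually equals v near points of Ioo
  have hev : ∀ x ∈ Set.Ioo a b, w =ᶠ[nhds x] v := by
    intro x hx
    exact Filter.eventuallyEq_of_mem (isOpen_Ioo.mem_nhds hx)
      (fun y hy => hwv y (Set.Ioo_subset_Icc_self hy))
  have hw' : ∀ x ∈ Set.Ioo a b, HasDerivAt w (W1 x) x := by
    intro x hx
    exact (hv' x hx).congr_of_eventuallyEq (hev x hx)
  have hderivw : ∀ x ∈ Set.Ioo a b, deriv w x = W1 x := fun x hx => (hw' x hx).deriv
  have hderiv2 : ∀ x ∈ Set.Ioo a b, deriv (deriv w) x = W2 x := by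
    intro x hx
    have hev2 : deriv w =ᶠ[nhds x] W1 :=
      Filter.eventuallyEq_of_mem (isOpen_Ioo.mem_nhds hx) (fun y hy => hderivw y hy)
    exact ((hW1' x hx).congr_of_eventuallyEq hev2).deriv
  constructor
  · -- ContDiffOn
    rw [show (2 : WithTop ℕ∞) = 1 + 1 from rfl,
      contDiffOn_succ_iff_deriv_of_isOpen isOpen_Ioo]
    refine ⟨fun x hx => (hw' x hx).differentiableAt.differentiableWithinAt, by simp, ?_⟩
    have hW1cd : ContDiffOn ℝ 1 W1 (Set.Ioo a b) := by
      rw [show (1 : WithTop ℕ∞) = 0 + 1 from rfl,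
        contDiffOn_succ_iff_deriv_of_isOpen isOpen_Ioo]
      refine ⟨fun x hx => (hW1' x hx).differentiableAt.differentiableWithinAt, by simp, ?_⟩
      have hW2c : ContinuousOn W2 (Set.Ioo a b) := by
        have hvc : ContinuousOn v (Set.Ioo a b) :=
          fun x hx => ((hv' x hx).differentiableAt.continuousAt).continuousWithinAt
        exact continuousOn_const.mul (hvc.sub (hu.mono Set.Ioo_subset_Icc_self))
      rw [contDiffOn_zero]
      exact hW2c.congr (fun x hx => (hW1' x hx).deriv)
    exact hW1cd.congr hderivw
  · intro x hx
    rw [hderiv2 x hx, hW2def]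
    have := hwv x (Set.Ioo_subset_Icc_self hx)
    field_simp
    linarith [this]
end

section
/- Let α > 0, let a < b, let u : [a,b] → ℝ be continuous, and set μ = e^{−α(b−a)}, I(x) = (α/2) ∫_a^b e^{−α|x−y|} u(y) dy. If the homogeneous coefficients are chosen as B_a = I(b)/(1−μ) and B_b = I(a)/(1−μ), then the function w(x) = I(x) + B_a e^{−α(x−a)} + B_b e^{−α(b−x)} satisfies the periodic boundary conditions w(a) = w(b) and w'(a) = w'(b). -/
open Real Set intervalIntegral


lemma helm_deriv
    (α a b : ℝ) (hα : 0 < α) (hab : a < b)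
    (v : ℝ → ℝ) (hv : Continuous v)
    (I : ℝ → ℝ)
    (hI : ∀ x : ℝ, I x = (α / 2) * ∫ y in a..b, Real.exp (-α * |x - y|) * v y) :
    HasDerivAt I (α * I a) a ∧ HasDerivAt I (-α * I b) b := by
  have hcont : ∀ x : ℝ, Continuous fun y => Real.exp (-α * |x - y|) * v y := by
    intro x
    fun_prop
  have hker : ∀ x c d : ℝ, IntervalIntegrable (fun y => Real.exp (-α * |x - y|) * v y)
      MeasureTheory.volume c d := fun x c d => (hcont x).intervalIntegrable c d
  set J : ℝ → ℝ := fun x => ∫ y in a..x, Real.exp (α * y) * v y with hJdef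
  set K : ℝ → ℝ := fun x => ∫ y in x..b, Real.exp (-α * y) * v y with hKdef
  have hJc : Continuous fun y => Real.exp (α * y) * v y := by fun_prop
  have hKc : Continuous fun y => Real.exp (-α * y) * v y := by fun_prop
  set F : ℝ → ℝ := fun x => (α / 2) * (Real.exp (-α * x) * J x + Real.exp (α * x) * K x)
    with hFdef
  -- I = F on [a,b]
  have hIF : ∀ x ∈ Icc a b, I x = F x := by
    intro x hx
    rw [hI, hFdef]
    have hsplit : (∫ y in a..b, Real.exp (-α * |x - y|) * v y)
        = (∫ y in a..x, Real.exp (-α * |x - y|) * v y)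
          + ∫ y in x..b, Real.exp (-α * |x - y|) * v y :=
      (integral_add_adjacent_intervals (hker x a x) (hker x x b)).symm
    have e1 : (∫ y in a..x, Real.exp (-α * |x - y|) * v y)
        = Real.exp (-α * x) * J x := by
      rw [hJdef, ← intervalIntegral.integral_const_mul]
      apply integral_congr
      intro y hy
      rw [uIcc_of_le hx.1] at hy
      have h0 : |x - y| = x - y := abs_of_nonneg (by linarith [hy.2])
      show Real.exp (-α * |x - y|) * v y = Real.exp (-α * x) * (Real.exp (α * y) * v y)
      rw [h0, show -α * (x - y) = -α * x + α * y by ring, Real.exp_add]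
      ring
    have e2 : (∫ y in x..b, Real.exp (-α * |x - y|) * v y)
        = Real.exp (α * x) * K x := by
      rw [hKdef, ← intervalIntegral.integral_const_mul]
      apply integral_congr
      intro y hy
      rw [uIcc_of_le hx.2] at hy
      have h0 : |x - y| = y - x := by
        rw [abs_of_nonpos (by linarith [hy.1])]; ring
      show Real.exp (-α * |x - y|) * v y = Real.exp (α * x) * (Real.exp (-α * y) * v y)
      rw [h0, show -α * (y - x) = α * x + -α * y by ring, Real.exp_add]
      ring
    rw [hsplit, e1, e2]
  -- derivative of F at any point
  have hFderiv : ∀ x : ℝ, HasDerivAt F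
      ((α / 2) * ((Real.exp (-α * x) * (-α)) * J x
        + Real.exp (-α * x) * (Real.exp (α * x) * v x)
        + ((Real.exp (α * x) * α) * K x
        + Real.exp (α * x) * (-(Real.exp (-α * x) * v x))))) x := by
    intro x
    have hJ' : HasDerivAt J (Real.exp (α * x) * v x) x :=
      integral_hasDerivAt_right (hJc.intervalIntegrable a x)
        (hJc.stronglyMeasurableAtFilter _ _) hJc.continuousAt
    have hK' : HasDerivAt K (-(Real.exp (-α * x) * v x)) x :=
      integral_hasDerivAt_left (hKc.intervalIntegrable x b)
        (hKc.stronglyMeasurableAtFilter _ _) hKc.continuousAt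
    have he1 : HasDerivAt (fun x => Real.exp (-α * x)) (Real.exp (-α * x) * (-α)) x := by
      simpa using ((hasDerivAt_id x).const_mul (-α)).exp
    have he2 : HasDerivAt (fun x => Real.exp (α * x)) (Real.exp (α * x) * α) x := by
      simpa using ((hasDerivAt_id x).const_mul α).exp
    exact ((he1.mul hJ').add (he2.mul hK')).const_mul (α / 2)
  have hJa : J a = 0 := integral_same
  have hKb : K b = 0 := integral_same
  constructor
  · -- at a
    have hC : ∀ x ∈ Iic a, I x = (α / 2) * (Real.exp (α * x) * K a) := by
      intro x hx
      rw [hI]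
      congr 1
      show (∫ y in a..b, Real.exp (-α * |x - y|) * v y)
          = Real.exp (α * x) * ∫ y in a..b, Real.exp (-α * y) * v y
      rw [← intervalIntegral.integral_const_mul]
      apply integral_congr
      intro y hy
      rw [uIcc_of_le hab.le] at hy
      have h0 : |x - y| = y - x := by
        rw [abs_of_nonpos (by simp only [mem_Iic] at hx; linarith [hy.1])]; ring
      show Real.exp (-α * |x - y|) * v y = Real.exp (α * x) * (Real.exp (-α * y) * v y)
      rw [h0, show -α * (y - x) = α * x + -α * y by ring, Real.exp_add]
      ring
    have hIa : I a = (α / 2) * (Real.exp (α * a) * K a) := hC a (mem_Iic.mpr le_rfl)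
    have he2a : HasDerivAt (fun x => Real.exp (α * x)) (Real.exp (α * a) * α) a := by
      simpa using ((hasDerivAt_id a).const_mul α).exp
    have hg := (he2a.mul_const (K a)).const_mul (α / 2)
    have hL : HasDerivWithinAt I (α * I a) (Iic a) a := by
      have h1 := (hg.hasDerivWithinAt.congr hC hIa)
      have : α * I a = α / 2 * (Real.exp (α * a) * α * K a) := by rw [hIa]; ring
      rwa [this]
    have hR : HasDerivWithinAt I (α * I a) (Ici a) a := by
      have hmem : Icc a b ∈ nhdsWithin a (Ici a) := by
        rw [← nhdsWithin_Icc_eq_nhdsGE hab]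
        exact self_mem_nhdsWithin
      have h1 := ((hFderiv a).hasDerivWithinAt (s := Ici a)).congr_of_eventuallyEq
        (Filter.eventuallyEq_of_mem hmem (fun x hx => hIF x hx))
        (hIF a ⟨le_rfl, hab.le⟩)
      have : α * I a = (α / 2) * ((Real.exp (-α * a) * (-α)) * J a
          + Real.exp (-α * a) * (Real.exp (α * a) * v a)
          + ((Real.exp (α * a) * α) * K a
          + Real.exp (α * a) * (-(Real.exp (-α * a) * v a)))) := by
        rw [hIa, hJa]; ring
      rwa [this]
    have h := hL.union hR
    rw [Iic_union_Ici] at h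
    exact hasDerivWithinAt_univ.mp h
  · -- at b
    have hD : ∀ x ∈ Ici b, I x = (α / 2) * (Real.exp (-α * x) * J b) := by
      intro x hx
      rw [hI]
      congr 1
      show (∫ y in a..b, Real.exp (-α * |x - y|) * v y)
          = Real.exp (-α * x) * ∫ y in a..b, Real.exp (α * y) * v y
      rw [← intervalIntegral.integral_const_mul]
      apply integral_congr
      intro y hy
      rw [uIcc_of_le hab.le] at hy
      have h0 : |x - y| = x - y := abs_of_nonneg (by simp only [mem_Ici] at hx; linarith [hy.2])
      show Real.exp (-α * |x - y|) * v y = Real.exp (-α * x) * (Real.exp (α * y) * v y)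
      rw [h0, show -α * (x - y) = -α * x + α * y by ring, Real.exp_add]
      ring
    have hIb : I b = (α / 2) * (Real.exp (-α * b) * J b) := hD b (mem_Ici.mpr le_rfl)
    have he1b : HasDerivAt (fun x => Real.exp (-α * x)) (Real.exp (-α * b) * (-α)) b := by
      simpa using ((hasDerivAt_id b).const_mul (-α)).exp
    have hg := (he1b.mul_const (J b)).const_mul (α / 2)
    have hR : HasDerivWithinAt I (-α * I b) (Ici b) b := by
      have h1 := (hg.hasDerivWithinAt.congr hD hIb)
      have : -α * I b = α / 2 * (Real.exp (-α * b) * (-α) * J b) := by rw [hIb]; ring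
      rwa [this]
    have hL : HasDerivWithinAt I (-α * I b) (Iic b) b := by
      have hmem : Icc a b ∈ nhdsWithin b (Iic b) := by
        rw [← nhdsWithin_Icc_eq_nhdsLE hab]
        exact self_mem_nhdsWithin
      have h1 := ((hFderiv b).hasDerivWithinAt (s := Iic b)).congr_of_eventuallyEq
        (Filter.eventuallyEq_of_mem hmem (fun x hx => hIF x hx))
        (hIF b ⟨hab.le, le_rfl⟩)
      have : -α * I b = (α / 2) * ((Real.exp (-α * b) * (-α)) * J b
          + Real.exp (-α * b) * (Real.exp (α * b) * v b)
          + ((Real.exp (α * b) * α) * K b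
          + Real.exp (α * b) * (-(Real.exp (-α * b) * v b)))) := by
        rw [hIb, hKb]; ring
      rwa [this]
    have h := hL.union hR
    rw [Iic_union_Ici] at h
    exact hasDerivWithinAt_univ.mp h

/-- With the homogeneous coefficients `B_a = I(b)/(1-μ)`, `B_b = I(a)/(1-μ)`,
`μ = e^{-α(b-a)}`, the modified Helmholtz inverse
`w(x) = I(x) + B_a e^{-α(x-a)} + B_b e^{-α(b-x)}`
satisfies the periodic boundary conditions `w(a) = w(b)` and `w'(a) = w'(b)`. -/
theorem periodic_boundary_conditions
    (α a b : ℝ) (hα : 0 < α) (hab : a < b)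
    (u : ℝ → ℝ) (hu : ContinuousOn u (Set.Icc a b))
    (I : ℝ → ℝ)
    (hI : ∀ x : ℝ, I x = (α / 2) * ∫ y in a..b, Real.exp (-α * |x - y|) * u y)
    (μ Ba Bb : ℝ) (hμ : μ = Real.exp (-α * (b - a)))
    (hBa : Ba = I b / (1 - μ)) (hBb : Bb = I a / (1 - μ))
    (w : ℝ → ℝ)
    (hw : ∀ x : ℝ, w x = I x + Ba * Real.exp (-α * (x - a)) + Bb * Real.exp (-α * (b - x))) :
    w a = w b ∧ deriv w a = deriv w b := by
  -- continuous extension of u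
  set v : ℝ → ℝ := fun y => u (max a (min b y)) with hvdef
  have hvc : Continuous v := by
    apply hu.comp_continuous (by fun_prop)
    intro y
    exact ⟨le_max_left _ _, max_le hab.le (min_le_left _ _)⟩
  have hIv : ∀ x : ℝ, I x = (α / 2) * ∫ y in a..b, Real.exp (-α * |x - y|) * v y := by
    intro x
    rw [hI x]
    congr 1
    apply intervalIntegral.integral_congr
    intro y hy
    rw [uIcc_of_le hab.le] at hy
    have hvy : v y = u y := by
      simp [hvdef, min_eq_right hy.2, max_eq_right hy.1]
    show Real.exp (-α * |x - y|) * u y = Real.exp (-α * |x - y|) * v y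
    rw [hvy]
  obtain ⟨hda, hdb⟩ := helm_deriv α a b hα hab v hvc I hIv
  have hwf : w = fun x => I x + Ba * Real.exp (-α * (x - a)) + Bb * Real.exp (-α * (b - x)) :=
    funext hw
  have h1a : HasDerivAt (fun x => -α * (x - a)) (-α) a := by
    simpa using ((hasDerivAt_id a).sub_const a).const_mul (-α)
  have h2a : HasDerivAt (fun x => -α * (b - x)) α a := by
    simpa using ((hasDerivAt_id a).const_sub b).const_mul (-α)
  have h1b : HasDerivAt (fun x => -α * (x - a)) (-α) b := by
    simpa using ((hasDerivAt_id b).sub_const a).const_mul (-α)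
  have h2b : HasDerivAt (fun x => -α * (b - x)) α b := by
    simpa using ((hasDerivAt_id b).const_sub b).const_mul (-α)
  have hwa : HasDerivAt w (α * I a + Ba * (Real.exp (-α * (a - a)) * (-α))
      + Bb * (Real.exp (-α * (b - a)) * α)) a := by
    rw [hwf]
    exact (hda.add ((h1a.exp).const_mul Ba)).add ((h2a.exp).const_mul Bb)
  have hwb : HasDerivAt w (-α * I b + Ba * (Real.exp (-α * (b - a)) * (-α))
      + Bb * (Real.exp (-α * (b - b)) * α)) b := by
    rw [hwf]
    exact (hdb.add ((h1b.exp).const_mul Ba)).add ((h2b.exp).const_mul Bb)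
  have hμpos : 0 < μ := by rw [hμ]; exact Real.exp_pos _
  have hμlt : μ < 1 := by
    rw [hμ, Real.exp_lt_one_iff]
    nlinarith
  have hne : (1 : ℝ) - μ ≠ 0 := ne_of_gt (by linarith)
  constructor
  · rw [hw a, hw b, hBa, hBb]
    simp only [sub_self, mul_zero, Real.exp_zero, ← hμ]
    field_simp
    ring
  · rw [hwa.deriv, hwb.deriv, hBa, hBb]
    simp only [sub_self, mul_zero, Real.exp_zero, ← hμ]
    field_simp
    ring
end

section
/- For every real x and every real t with |t| < 1, the generating function identity for the Laguerre polynomials holds: ∑_{n=0}^{∞} L_n(x) t^n = (1−t)^{−1} e^{−x t/(1−t)}, where the series converges absolutely. -/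
open Real Finset

/-- The Laguerre polynomial `L_n(x) = ∑_{k=0}^n (-1)^k (n choose k) x^k / k!`. -/
noncomputable def laguerre (n : ℕ) (x : ℝ) : ℝ :=
  ∑ k ∈ Finset.range (n + 1), (-1) ^ k * (n.choose k : ℝ) * x ^ k / (Nat.factorial k : ℝ)

/-- Auxiliary: for a fixed `k`, the column sum
`∑_{n ≥ k} c * C(n,k) * r^n = c * r^k / (1-r)^(k+1)`. -/
lemma laguerre_aux_hasSum (k : ℕ) {r : ℝ} (hr : |r| < 1) (c : ℝ) :
    HasSum (fun n : ℕ => if k ≤ n then c * (n.choose k : ℝ) * r ^ n else 0)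
      (c * r ^ k * (1 / (1 - r) ^ (k + 1))) := by
  have hr' : ‖r‖ < 1 := by rwa [Real.norm_eq_abs]
  have h := (hasSum_choose_mul_geometric_of_norm_lt_one k hr').mul_left (c * r ^ k)
  have h' : HasSum (fun m : ℕ =>
      (fun n : ℕ => if k ≤ n then c * (n.choose k : ℝ) * r ^ n else 0) (m + k))
      (c * r ^ k * (1 / (1 - r) ^ (k + 1))) := by
    refine h.congr_fun fun m => ?_
    simp only [Nat.le_add_left k m, if_pos]
    ring
  have h2 := (hasSum_nat_add_iff (f := fun n : ℕ =>
      if k ≤ n then c * (n.choose k : ℝ) * r ^ n else 0) k).mp h'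
  have hz : ∑ i ∈ Finset.range k, (if k ≤ i then c * (i.choose k : ℝ) * r ^ i else 0) = 0 :=
    Finset.sum_eq_zero fun i hi => if_neg (by simp only [Finset.mem_range] at hi; omega)
  rwa [hz, add_zero] at h2

/-- Generating function of the Laguerre polynomials:
for `|t| < 1`, `∑ L_n(x) tⁿ = (1-t)⁻¹ e^{-xt/(1-t)}`, with absolute convergence. -/
theorem laguerre_generating_function (x t : ℝ) (ht : |t| < 1) :
    Summable (fun n : ℕ => |laguerre n x * t ^ n|) ∧
      ∑' n : ℕ, laguerre n x * t ^ n = (1 - t)⁻¹ * Real.exp (-x * t / (1 - t)) := by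
  have h1t : (0:ℝ) < 1 - t := by
    rw [abs_lt] at ht; linarith
  have h1t' : (0:ℝ) < 1 - |t| := by linarith [ht]
  -- the double-indexed family, k = degree index, n = power of t
  set f : ℕ × ℕ → ℝ := fun p =>
    if p.1 ≤ p.2 then ((-1:ℝ)) ^ p.1 * x ^ p.1 / (Nat.factorial p.1 : ℝ)
      * (p.2.choose p.1 : ℝ) * t ^ p.2 else 0 with hf
  -- absolute values
  have habs : ∀ p : ℕ × ℕ, |f p| =
      if p.1 ≤ p.2 then |x| ^ p.1 / (Nat.factorial p.1 : ℝ)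
        * (p.2.choose p.1 : ℝ) * |t| ^ p.2 else 0 := by
    intro p
    by_cases h : p.1 ≤ p.2 <;> simp [hf, h, abs_mul, abs_div, abs_pow, abs_abs]
  -- column HasSum for the signed family
  have hcol : ∀ k : ℕ, HasSum (fun n => f (k, n))
      (((-1:ℝ)) ^ k * x ^ k / (Nat.factorial k : ℝ) * t ^ k * (1 / (1 - t) ^ (k + 1))) := by
    intro k
    have := laguerre_aux_hasSum k ht (((-1:ℝ)) ^ k * x ^ k / (Nat.factorial k : ℝ))
    refine this.congr_fun fun n => ?_
    simp [hf]
  -- column HasSum for the absolute values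
  have hcolabs : ∀ k : ℕ, HasSum (fun n => |f (k, n)|)
      (|x| ^ k / (Nat.factorial k : ℝ) * |t| ^ k * (1 / (1 - |t|) ^ (k + 1))) := by
    intro k
    have := laguerre_aux_hasSum k (by rwa [abs_abs]) (|x| ^ k / (Nat.factorial k : ℝ))
    refine this.congr_fun fun n => ?_
    simp [habs (k, n)]
  -- summability of the absolute double sum
  have hzero : ∀ (k n : ℕ), ¬ k ≤ n → f (k, n) = 0 := fun k n h => by simp [hf, h]
  have hcolsums : Summable (fun k : ℕ =>
      |x| ^ k / (Nat.factorial k : ℝ) * |t| ^ k * (1 / (1 - |t|) ^ (k + 1))) := by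
    have : ∀ k : ℕ, |x| ^ k / (Nat.factorial k : ℝ) * |t| ^ k * (1 / (1 - |t|) ^ (k + 1))
        = (1 / (1 - |t|)) * ((|x| * |t| / (1 - |t|)) ^ k / (Nat.factorial k : ℝ)) := by
      intro k
      rw [pow_succ]
      field_simp
      have h3 : ((1 - |t|)⁻¹) ^ k * (1 - |t|) ^ k = 1 := by
        rw [← mul_pow, inv_mul_cancel₀ (ne_of_gt h1t'), one_pow]
      linear_combination (-(|x| ^ k * |t| ^ k)) * h3
    simp only [this]
    exact (Real.summable_pow_div_factorial _).mul_left _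
  have hsabs : Summable (fun p : ℕ × ℕ => |f p|) := by
    rw [summable_prod_of_nonneg (fun p => abs_nonneg (f p))]
    refine ⟨fun k => (hcolabs k).summable, ?_⟩
    refine hcolsums.congr fun k => ?_
    exact ((hcolabs k).tsum_eq).symm
  have hs : Summable f := summable_abs_iff.mp hsabs
  -- rows: for fixed n, the row is finitely supported and sums to L_n(x) t^n
  have hrow : ∀ n : ℕ, ∑' k, f (k, n) = laguerre n x * t ^ n := by
    intro n
    rw [tsum_eq_sum (s := Finset.range (n + 1))
      (fun k hk => hzero k n (by simp only [Finset.mem_range] at hk; omega))]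
    rw [laguerre, Finset.sum_mul]
    refine Finset.sum_congr rfl fun k hk => ?_
    simp only [Finset.mem_range] at hk
    simp only [hf, if_pos (by omega : k ≤ n)]
    ring
  -- second part of the conjunction: the value of the sum
  constructor
  · -- absolute summability of ∑ L_n(x) t^n
    have hswap : Summable (fun p : ℕ × ℕ => |f p.swap|) :=
      hsabs.prod_symm
    have h2 := (summable_prod_of_nonneg (f := fun p : ℕ × ℕ => |f p.swap|)
      (fun p => abs_nonneg _)).mp hswap
    refine Summable.of_nonneg_of_le (fun n => abs_nonneg _) (fun n => ?_) h2.2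
    have hb : |laguerre n x * t ^ n| ≤ ∑ k ∈ Finset.range (n + 1), |f (k, n)| := by
      rw [← hrow n, tsum_eq_sum (s := Finset.range (n + 1))
        (fun k hk => hzero k n (by simp only [Finset.mem_range] at hk; omega))]
      exact Finset.abs_sum_le_sum_abs _ _
    refine hb.trans ?_
    have : ∑ k ∈ Finset.range (n + 1), |f (k, n)| = ∑' k, |f (k, n)| := by
      rw [tsum_eq_sum (s := Finset.range (n + 1))
        (fun k hk => congrArg abs (hzero k n (by simp only [Finset.mem_range] at hk; omega)) |>.trans abs_zero)]
    rw [this]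
    rfl
  · -- compute the sum by switching the order of summation
    have hLHS : ∑' n : ℕ, laguerre n x * t ^ n = ∑' p : ℕ × ℕ, f p := by
      have h1 : ∑' p : ℕ × ℕ, f p.swap = ∑' (n : ℕ) (k : ℕ), f (k, n) :=
        Summable.tsum_prod hs.prod_symm
      have h2 : ∑' p : ℕ × ℕ, f p.swap = ∑' p : ℕ × ℕ, f p :=
        (Equiv.prodComm ℕ ℕ).tsum_eq f
      rw [← h2, h1]
      exact tsum_congr fun n => (hrow n).symm
    rw [hLHS, Summable.tsum_prod hs]
    have : ∀ k : ℕ, ∑' n, f (k, n)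
        = (1 - t)⁻¹ * ((-x * t / (1 - t)) ^ k / (Nat.factorial k : ℝ)) := by
      intro k
      rw [(hcol k).tsum_eq, pow_succ]
      have hk : (Nat.factorial k : ℝ) ≠ 0 := Nat.cast_ne_zero.mpr (Nat.factorial_ne_zero k)
      have hne : (1 - t) ≠ 0 := ne_of_gt h1t
      field_simp
      have h3 : ((1 - t)⁻¹) ^ k * (1 - t) ^ k = 1 := by
        rw [← mul_pow, inv_mul_cancel₀ hne, one_pow]
      linear_combination (-(x ^ k * t ^ k * (-1) ^ k)) * h3
    rw [tsum_congr this, tsum_mul_left]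
    congr 1
    rw [Real.exp_eq_exp_ℝ, NormedSpace.exp_eq_tsum_div]
end

section
/- For every real x and every real t with |t| < 1, the generating function identity for the generalized Laguerre polynomials of parameter λ = −1 holds: ∑_{n=0}^{∞} L_n^{(−1)}(x) t^n = e^{−x t/(1−t)}, where the series converges absolutely. -/
open Real Finset

/-- The generalized Laguerre polynomial of parameter `λ = -1`:
`L_0^{(-1)}(x) = 1` and, for `n ≥ 1`,
`L_n^{(-1)}(x) = ∑_{k=0}^n (-1)^k (n-1 choose n-k) x^k / k!`. -/
noncomputable def laguerreM1 : ℕ → ℝ → ℝ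
  | 0, _ => 1
  | n + 1, x => ∑ k ∈ Finset.range (n + 2),
      (-1) ^ k * (n.choose (n + 1 - k) : ℝ) * x ^ k / (Nat.factorial k : ℝ)

/-- auxiliary double-indexed term -/
noncomputable def lagAux (x t : ℝ) (p : ℕ × ℕ) : ℝ :=
  x ^ p.1 / (Nat.factorial p.1 : ℝ) * ((p.1 + p.2 - 1).choose p.2 : ℝ) * t ^ (p.1 + p.2)

lemma lagAux_abs (x t : ℝ) (p : ℕ × ℕ) : |lagAux x t p| = lagAux |x| |t| p := by
  simp [lagAux, abs_mul, abs_div, abs_pow, Nat.abs_cast]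

lemma lagAux_inner_hasSum (x : ℝ) {t : ℝ} (ht : |t| < 1) (m : ℕ) :
    HasSum (fun j => lagAux x t (m, j)) (x ^ m / (Nat.factorial m : ℝ) * (t / (1 - t)) ^ m) := by
  cases m with
  | zero =>
    simp only [lagAux, pow_zero, Nat.factorial_zero, Nat.cast_one, div_one, one_mul, zero_add]
    have : (fun j : ℕ => ((j - 1).choose j : ℝ) * t ^ j) =
        fun j => if j = 0 then (1 : ℝ) else 0 := by
      funext j
      cases j with
      | zero => simp
      | succ j =>
        have h : (j + 1 - 1).choose (j + 1) = 0 := Nat.choose_eq_zero_of_lt (by omega)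
        simp [h]
    rw [this]
    simpa using hasSum_ite_eq (0 : ℕ) (1 : ℝ)
  | succ k =>
    have h0 : HasSum (fun j : ℕ => ((j + k).choose k : ℝ) * t ^ j) (1 / (1 - t) ^ (k + 1)) :=
      hasSum_choose_mul_geometric_of_norm_lt_one k (by simpa using ht)
    have heq : (fun j => lagAux x t (k + 1, j)) = fun j =>
        (x ^ (k + 1) / (Nat.factorial (k + 1) : ℝ) * t ^ (k + 1)) *
          (((j + k).choose k : ℝ) * t ^ j) := by
      funext j
      show x ^ (k + 1) / (Nat.factorial (k + 1) : ℝ) * ((k + 1 + j - 1).choose j : ℝ) *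
          t ^ (k + 1 + j) = _
      have h2 : k + 1 + j - 1 = j + k := by omega
      have h3 : (j + k).choose j = (j + k).choose k := by
        rw [← Nat.choose_symm (Nat.le_add_left k j)]
        congr 1
        omega
      rw [h2, h3, pow_add]
      ring
    rw [heq]
    have h1 := h0.mul_left (x ^ (k + 1) / (Nat.factorial (k + 1) : ℝ) * t ^ (k + 1))
    have e2 : x ^ (k + 1) / (Nat.factorial (k + 1) : ℝ) * (t / (1 - t)) ^ (k + 1) =
        x ^ (k + 1) / (Nat.factorial (k + 1) : ℝ) * t ^ (k + 1) * (1 / (1 - t) ^ (k + 1)) := by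
      rw [div_pow]
      ring
    rw [e2]
    exact h1

lemma lagAux_summable {x t : ℝ} (hx : 0 ≤ x) (ht0 : 0 ≤ t) (ht : t < 1) :
    Summable (lagAux x t) := by
  have habs : |t| < 1 := by rwa [abs_of_nonneg ht0]
  have hnn : 0 ≤ lagAux x t := by
    intro p
    have : (0:ℝ) ≤ 1 - t := by linarith
    exact mul_nonneg (mul_nonneg (div_nonneg (pow_nonneg hx _) (Nat.cast_nonneg _))
      (Nat.cast_nonneg _)) (pow_nonneg ht0 _)
  rw [summable_prod_of_nonneg hnn]
  refine ⟨fun m => (lagAux_inner_hasSum x habs m).summable, ?_⟩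
  have : (fun m => ∑' j, lagAux x t (m, j)) =
      fun m => (x * (t / (1 - t))) ^ m / (Nat.factorial m : ℝ) := by
    funext m
    rw [(lagAux_inner_hasSum x habs m).tsum_eq, mul_pow]
    ring
  rw [this]
  exact Real.summable_pow_div_factorial _

lemma lagAux_antidiagonal_sum (x t : ℝ) (n : ℕ) :
    ∑ p ∈ Finset.HasAntidiagonal.antidiagonal n, lagAux (-x) t p = laguerreM1 n x * t ^ n := by
  rw [Finset.Nat.sum_antidiagonal_eq_sum_range_succ_mk]
  cases n with
  | zero => simp [lagAux, laguerreM1]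
  | succ N =>
    rw [laguerreM1, Finset.sum_mul]
    refine Finset.sum_congr rfl fun k hk => ?_
    rw [Finset.mem_range] at hk
    show (-x) ^ k / _ * ((k + (N + 1 - k) - 1).choose (N + 1 - k) : ℝ) * t ^ (k + (N + 1 - k)) = _
    have h1 : k + (N + 1 - k) = N + 1 := by omega
    have h2 : k + (N + 1 - k) - 1 = N := by omega
    rw [h1, Nat.add_sub_cancel, neg_pow]
    ring

/-- Generating function of the generalized Laguerre polynomials with parameter `-1`:
for `|t| < 1`, `∑ L_n^{(-1)}(x) tⁿ = e^{-xt/(1-t)}`, with absolute convergence. -/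
theorem laguerreM1_generating_function (x t : ℝ) (ht : |t| < 1) :
    Summable (fun n : ℕ => |laguerreM1 n x * t ^ n|) ∧
      ∑' n : ℕ, laguerreM1 n x * t ^ n = Real.exp (-x * t / (1 - t)) := by
  have hS' : Summable (lagAux |x| |t|) :=
    lagAux_summable (abs_nonneg x) (abs_nonneg t) ht
  have hSabs : Summable (fun p => |lagAux (-x) t p|) := by
    have : (fun p => |lagAux (-x) t p|) = lagAux |x| |t| := by
      funext p; rw [lagAux_abs, abs_neg]
    rwa [this]
  have hS : Summable (lagAux (-x) t) := hSabs.of_abs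
  -- sigma version
  set e := Finset.HasAntidiagonal.sigmaAntidiagonalEquivProd (A := ℕ)
  have hSsig : Summable (lagAux (-x) t ∘ e) := e.summable_iff.mpr hS
  have hSsigabs : Summable (fun σ => |lagAux (-x) t (e σ)|) := by
    have := e.summable_iff.mpr hSabs
    exact this
  have hfiber : ∀ n, ∑' p : (Finset.HasAntidiagonal.antidiagonal n : Finset (ℕ × ℕ)),
      lagAux (-x) t p = laguerreM1 n x * t ^ n := by
    intro n
    rw [tsum_fintype, Finset.sum_coe_sort, lagAux_antidiagonal_sum]
  constructor
  · -- summability of |L_n t^n|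
    have h1 : Summable (fun n : ℕ => ∑' p : (Finset.HasAntidiagonal.antidiagonal n : Finset (ℕ × ℕ)),
        |lagAux (-x) t p|) := hSsigabs.sigma
    refine h1.of_nonneg_of_le (fun n => abs_nonneg _) (fun n => ?_)
    rw [← hfiber n, tsum_fintype, tsum_fintype]
    exact (Finset.abs_sum_le_sum_abs _ _)
  · have h2 : ∑' σ, lagAux (-x) t (e σ) = ∑' p, lagAux (-x) t p := e.tsum_eq _
    have h3 : ∑' σ, lagAux (-x) t (e σ) =
        ∑' n, ∑' p : (Finset.HasAntidiagonal.antidiagonal n : Finset (ℕ × ℕ)), lagAux (-x) t p :=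
      Summable.tsum_sigma' (fun n => hSsig.sigma_factor n) hSsig
    have h4 : ∑' p, lagAux (-x) t p = Real.exp (-x * t / (1 - t)) := by
      rw [Summable.tsum_prod' hS (fun m => (lagAux_inner_hasSum (-x) ht m).summable)]
      have : (fun m => ∑' j, lagAux (-x) t (m, j)) =
          fun m => (-x * t / (1 - t)) ^ m / (Nat.factorial m : ℝ) := by
        funext m
        rw [(lagAux_inner_hasSum (-x) ht m).tsum_eq, div_pow, mul_div_assoc, mul_pow, div_pow]
        ring
      rw [this, Real.exp_eq_exp_ℝ, NormedSpace.exp_eq_tsum_div]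
    calc ∑' n : ℕ, laguerreM1 n x * t ^ n
        = ∑' n, ∑' p : (Finset.HasAntidiagonal.antidiagonal n : Finset (ℕ × ℕ)), lagAux (-x) t p := by
          exact tsum_congr fun n => (hfiber n).symm
      _ = ∑' p, lagAux (-x) t p := by rw [← h3, h2]
      _ = Real.exp (-x * t / (1 - t)) := h4
end

section
/- Let β > 0 and define d̂(z) = z/(z − β²) for complex z ≠ β². Then for every complex z with Re z < β²/2, one has |d̂(z)| < 1 and the expansion ∑_{p=0}^{∞} L_p^{(−1)}(β²) · d̂(z)^p converges absolutely with sum equal to e^{z}. -/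
open Real Finset Complex

lemma laguerreM1_zero (x : ℝ) : laguerreM1 0 x = 1 := rfl

/-- Reindexing identity for the Laguerre polynomial of parameter `-1`. -/
lemma laguerreM1_succ_eq (n : ℕ) (x : ℝ) :
    laguerreM1 (n + 1) x
      = ∑ j ∈ Finset.range (n + 1),
          (n.choose j : ℝ) * ((-x) ^ (j + 1) / ((j + 1).factorial : ℝ)) := by
  show (∑ k ∈ Finset.range (n + 2),
      (-1) ^ k * (n.choose (n + 1 - k) : ℝ) * x ^ k / (Nat.factorial k : ℝ)) = _
  rw [Finset.sum_range_succ']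
  have h0 : (-1 : ℝ) ^ 0 * (n.choose (n + 1 - 0) : ℝ) * x ^ 0 / (Nat.factorial 0 : ℝ) = 0 := by
    rw [Nat.choose_eq_zero_of_lt (by omega)]
    simp
  rw [h0, add_zero]
  refine Finset.sum_congr rfl fun j hj => ?_
  have hj' : j ≤ n := by
    simp only [Finset.mem_range] at hj; omega
  have hch : n + 1 - (j + 1) = n - j := by omega
  rw [hch, Nat.choose_symm hj']
  rw [neg_pow x (j + 1)]
  ring

/-- The triangle-indexing equivalence. -/
def sigEquiv : (Σ n : ℕ, Fin (n + 1)) ≃ ℕ × ℕ where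
  toFun p := ((p.2 : ℕ), p.1 - (p.2 : ℕ))
  invFun q := ⟨q.1 + q.2, ⟨q.1, by omega⟩⟩
  left_inv := by
    rintro ⟨n, j⟩
    have hj : (j : ℕ) ≤ n := Nat.lt_succ_iff.mp j.isLt
    have h : (j : ℕ) + (n - (j : ℕ)) = n := by omega
    refine Sigma.ext h ?_
    rw [Fin.heq_ext_iff (by omega : (j : ℕ) + (n - (j : ℕ)) + 1 = n + 1)]
  right_inv := by
    rintro ⟨j, m⟩
    simp

/-- For `Re z < β²/2` one has `|z/(z-β²)| < 1`, and the resolvent expansion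
`∑_{p=0}^∞ L_p^{(-1)}(β²) (z/(z-β²))^p` converges absolutely with sum `e^z`. -/
theorem resolvent_expansion_scalar (β : ℝ) (hβ : 0 < β) (z : ℂ)
    (hz : z.re < β ^ 2 / 2) :
    ‖z / (z - (β : ℂ) ^ 2)‖ < 1 ∧
    Summable (fun p : ℕ =>
      ‖(laguerreM1 p (β ^ 2) : ℂ) * (z / (z - (β : ℂ) ^ 2)) ^ p‖) ∧
    ∑' p : ℕ, (laguerreM1 p (β ^ 2) : ℂ) * (z / (z - (β : ℂ) ^ 2)) ^ p
      = Complex.exp z := by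
  set x : ℝ := β ^ 2 with hx
  have hx0 : 0 < x := by positivity
  set c : ℂ := (β : ℂ) ^ 2 with hc
  have hcx : c = (x : ℂ) := by push_cast [hc, hx]; ring
  have hc0 : c ≠ 0 := by
    rw [hcx]
    exact_mod_cast ne_of_gt hx0
  have h1 : z - c ≠ 0 := by
    intro h
    have hzc : z = c := by linear_combination h
    rw [hzc, hcx] at hz
    simp only [Complex.ofReal_re] at hz
    linarith
  set t : ℂ := z / (z - c) with htdef
  -- |t| < 1
  have ht : ‖t‖ < 1 := by
    rw [htdef, norm_div, div_lt_one (norm_pos_iff.mpr h1)]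
    have hsq : ‖z‖ ^ 2 < ‖z - c‖ ^ 2 := by
      rw [Complex.sq_norm, Complex.sq_norm, Complex.normSq_apply, Complex.normSq_apply]
      have hre : (z - c).re = z.re - x := by rw [hcx]; simp
      have him : (z - c).im = z.im := by rw [hcx]; simp
      rw [hre, him]
      nlinarith [hz]
    have h0 : (0 : ℝ) ≤ ‖z‖ := norm_nonneg z
    have h0' : (0 : ℝ) ≤ ‖z - c‖ := norm_nonneg _
    nlinarith
  have ht' : ‖t‖ < 1 := ht
  have h1t : (1 : ℂ) - t ≠ 0 := by
    intro h
    have habs : ‖1 - t‖ = 0 := by rw [h]; simp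
    have h2 : (1 : ℝ) ≤ ‖t‖ := by
      have h3 := norm_add_le (1 - t) t
      simp only [sub_add_cancel] at h3
      simpa [habs] using h3
    linarith
  -- main scalar identity : (-x) * (t / (1 - t)) = z
  have hscalar : (-(x : ℂ)) * (t / (1 - t)) = z := by
    rw [htdef, ← hcx]
    field_simp
    rw [show z - c - z = -c by ring, div_neg, neg_neg, mul_div_cancel_left₀ _ hc0]
  set T : ℝ := ‖t‖ with hT
  have hT0 : 0 ≤ T := norm_nonneg t
  have hT1 : T < 1 := ht
  have h1T : (0 : ℝ) < 1 - T := by linarith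
  have hnt : ‖t‖ = T := rfl
  clear_value T
  clear_value t
  -- the doubly-indexed family and its norms
  set G : ℕ × ℕ → ℂ := fun q =>
    ((q.1 + q.2).choose q.1 : ℂ) * ((-(x : ℂ)) ^ (q.1 + 1) / ((q.1 + 1).factorial : ℂ))
      * t ^ (q.1 + q.2 + 1) with hG
  set N : ℕ × ℕ → ℝ := fun q =>
    ((q.1 + q.2).choose q.1 : ℝ) * (x ^ (q.1 + 1) / ((q.1 + 1).factorial : ℝ))
      * T ^ (q.1 + q.2 + 1) with hN
  have hnormG : ∀ q, ‖G q‖ = N q := by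
    rintro ⟨j, m⟩
    simp only [hG, hN]
    rw [norm_mul, norm_mul, norm_div, norm_pow, norm_pow]
    have hxn : ‖(-(x : ℂ))‖ = x := by
      rw [norm_neg, Complex.norm_real, Real.norm_of_nonneg hx0.le]
    rw [hxn]
    simp only [Complex.norm_natCast, hnt]
  -- summability of the norms
  have hNsum : Summable N := by
    have hNpos : ∀ q, 0 ≤ N q := by
      rintro ⟨j, m⟩
      simp only [hN]
      have : (0:ℝ) ≤ x ^ (j + 1) / ((j + 1).factorial : ℝ) := by positivity
      exact mul_nonneg (mul_nonneg (Nat.cast_nonneg _) this) (pow_nonneg hT0 _)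
    refine (summable_prod_of_nonneg hNpos).mpr ⟨fun j => ?_, ?_⟩
    · have := (summable_choose_mul_geometric_of_norm_lt_one (R := ℝ) j
        (by rwa [Real.norm_of_nonneg hT0])).mul_left
        ((x ^ (j + 1) / ((j + 1).factorial : ℝ)) * T ^ (j + 1))
      refine this.congr fun m => ?_
      simp only [hN]
      rw [show j + m = m + j by omega, pow_add]
      ring
    · -- the fiber sums
      have hfib : ∀ j : ℕ, HasSum (fun m => N (j, m))
          ((x * T / (1 - T)) ^ (j + 1) / ((j + 1).factorial : ℝ)) := by
        intro j
        have hbase := (hasSum_choose_mul_geometric_of_norm_lt_one (𝕜 := ℝ) j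
          (by rwa [Real.norm_of_nonneg hT0])).mul_left
          ((x ^ (j + 1) / ((j + 1).factorial : ℝ)) * T ^ (j + 1))
        have heq : (x ^ (j + 1) / ((j + 1).factorial : ℝ)) * T ^ (j + 1)
            * (1 / (1 - T) ^ (j + 1)) = (x * T / (1 - T)) ^ (j + 1) / ((j + 1).factorial : ℝ) := by
          rw [div_pow, mul_pow]
          ring
        rw [heq] at hbase
        refine hbase.congr_fun fun m => ?_
        simp only [hN]
        rw [show j + m = m + j by omega, pow_add]
        ring
      have hsum2 : Summable (fun j : ℕ =>
          (x * T / (1 - T)) ^ (j + 1) / ((j + 1).factorial : ℝ)) :=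
        (summable_nat_add_iff 1).mpr (Real.summable_pow_div_factorial (x * T / (1 - T)))
      refine hsum2.congr fun j => ?_
      rw [(hfib j).tsum_eq]
  have hGsum : Summable G := by
    apply Summable.of_norm
    refine hNsum.congr fun q => (hnormG q).symm
  -- per-fiber sums of G
  have hGfib : ∀ j : ℕ, HasSum (fun m => G (j, m)) (z ^ (j + 1) / ((j + 1).factorial : ℂ)) := by
    intro j
    have hbase := (hasSum_choose_mul_geometric_of_norm_lt_one (𝕜 := ℂ) j (lt_of_eq_of_lt hnt ht')).mul_left
      (((-(x : ℂ)) ^ (j + 1) / ((j + 1).factorial : ℂ)) * t ^ (j + 1))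
    have heq : ((-(x : ℂ)) ^ (j + 1) / ((j + 1).factorial : ℂ)) * t ^ (j + 1)
        * (1 / (1 - t) ^ (j + 1)) = z ^ (j + 1) / ((j + 1).factorial : ℂ) := by
      rw [← hscalar, mul_pow, div_pow]
      ring
    rw [heq] at hbase
    refine hbase.congr_fun fun m => ?_
    simp only [hG]
    rw [show j + m = m + j by omega, pow_add]
    ring
  -- sum of fiber values : exp z - 1
  have hexp : HasSum (fun n : ℕ => z ^ n / (n.factorial : ℂ)) (Complex.exp z) := by
    rw [Complex.exp_eq_exp_ℂ]
    exact NormedSpace.expSeries_div_hasSum_exp z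
  have hexp' : HasSum (fun j : ℕ => z ^ (j + 1) / ((j + 1).factorial : ℂ))
      (Complex.exp z - 1) := by
    have h4 := (hasSum_nat_add_iff' (f := fun n : ℕ => z ^ n / (n.factorial : ℂ)) 1).mpr hexp
    simpa using h4
  -- G has sum exp z - 1
  have hGsum' : HasSum G (Complex.exp z - 1) := by
    have h2 : HasSum (fun j : ℕ => z ^ (j + 1) / ((j + 1).factorial : ℂ)) (∑' q, G q) :=
      hGsum.hasSum.prod_fiberwise hGfib
    have h3 : ∑' q, G q = Complex.exp z - 1 := h2.unique hexp'
    exact h3 ▸ hGsum.hasSum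
  -- transfer along the triangle equivalence
  set f : (Σ n : ℕ, Fin (n + 1)) → ℂ := fun p =>
    ((p.1.choose (p.2 : ℕ)) : ℂ)
      * ((-(x : ℂ)) ^ ((p.2 : ℕ) + 1) / (((p.2 : ℕ) + 1).factorial : ℂ)) * t ^ (p.1 + 1)
    with hf
  have hfeq : ∀ p, f p = G (sigEquiv p) := by
    rintro ⟨n, j⟩
    have hj : (j : ℕ) ≤ n := Nat.lt_succ_iff.mp j.isLt
    simp only [hf, hG, sigEquiv, Equiv.coe_fn_mk]
    rw [show (j : ℕ) + (n - (j : ℕ)) = n by omega]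
  have hfsum : HasSum f (Complex.exp z - 1) := by
    rw [show f = G ∘ sigEquiv from funext hfeq]
    exact (sigEquiv.hasSum_iff).mpr hGsum'
  -- the triangular rows are exactly laguerreM1 (n+1) x * t^(n+1)
  have hrow : ∀ n : ℕ, (∑ j : Fin (n + 1), f ⟨n, j⟩)
      = ((laguerreM1 (n + 1) x : ℝ) : ℂ) * t ^ (n + 1) := by
    intro n
    have step1 : (∑ j : Fin (n + 1), f ⟨n, j⟩)
        = ∑ k ∈ Finset.range (n + 1),
            ((n.choose k : ℂ) * ((-(x : ℂ)) ^ (k + 1) / ((k + 1).factorial : ℂ))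
              * t ^ (n + 1)) :=
      Fin.sum_univ_eq_sum_range
        (fun k => (n.choose k : ℂ) * ((-(x : ℂ)) ^ (k + 1) / ((k + 1).factorial : ℂ))
          * t ^ (n + 1)) (n + 1)
    rw [step1, laguerreM1_succ_eq]
    push_cast
    rw [Finset.sum_mul]
  have hLsum : HasSum (fun n : ℕ => ((laguerreM1 (n + 1) x : ℝ) : ℂ) * t ^ (n + 1))
      (Complex.exp z - 1) := by
    refine hfsum.sigma fun n => ?_
    rw [← hrow n]
    exact hasSum_fintype _
  have hfull : HasSum (fun p : ℕ => ((laguerreM1 p x : ℝ) : ℂ) * t ^ p) (Complex.exp z) := by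
    have h5 := (hasSum_nat_add_iff
      (f := fun p : ℕ => ((laguerreM1 p x : ℝ) : ℂ) * t ^ p) 1).mp hLsum
    have h6 : Complex.exp z - 1
        + ∑ i ∈ Finset.range 1, ((laguerreM1 i x : ℝ) : ℂ) * t ^ i = Complex.exp z := by
      rw [Finset.sum_range_one, laguerreM1_zero]
      simp
    rwa [h6] at h5
  refine ⟨ht, ?_, hfull.tsum_eq⟩
  -- summability of the absolute values
  have hNf : Summable (fun p : (Σ n : ℕ, Fin (n + 1)) => ‖f p‖) := by
    have h7 : Summable (N ∘ sigEquiv) := (sigEquiv.summable_iff).mpr hNsum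
    refine h7.congr fun p => ?_
    rw [Function.comp_apply, ← hnormG (sigEquiv p), hfeq p]
  have hrowsum : Summable (fun n : ℕ => ∑ j : Fin (n + 1), ‖f ⟨n, j⟩‖) :=
    HasSum.summable (hNf.hasSum.sigma fun n => hasSum_fintype _)
  have hcomp : Summable (fun n : ℕ =>
      ‖((laguerreM1 (n + 1) x : ℝ) : ℂ) * t ^ (n + 1)‖) := by
    refine Summable.of_nonneg_of_le (fun n => norm_nonneg _) (fun n => ?_) hrowsum
    rw [show (‖((laguerreM1 (n + 1) x : ℝ) : ℂ) * t ^ (n + 1)‖ : ℝ)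
        = ‖∑ j : Fin (n + 1), f ⟨n, j⟩‖ by rw [hrow n]]
    exact norm_sum_le _ _
  exact (summable_nat_add_iff
    (f := fun p : ℕ => ‖((laguerreM1 p x : ℝ) : ℂ) * t ^ p‖) 1).mp hcomp
end

section
/- Let β > 0, let P be a natural number, and define the amplification factor φ_P(z) = ∑_{p=0}^{P} L_p^{(−1)}(β²) · (z/(z−β²))^p. Then the limit of φ_P(z) as real z → −∞ exists and equals L_P(β²), the Laguerre polynomial of degree P evaluated at β². -/
open Real Finset Filter

/-- Successive sums of generalized Laguerre polynomials of parameter `-1` give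
the ordinary Laguerre polynomials. -/
lemma sum_laguerreM1 (P : ℕ) (x : ℝ) :
    ∑ p ∈ Finset.range (P + 1), laguerreM1 p x = laguerre P x := by
  induction P with
  | zero => simp [laguerre, laguerreM1]
  | succ n ih =>
    rw [Finset.sum_range_succ, ih]
    unfold laguerre laguerreM1
    have h1 : ∑ k ∈ Finset.range (n + 2), (-1:ℝ) ^ k * (n.choose k : ℝ) * x ^ k / (Nat.factorial k : ℝ)
        = ∑ k ∈ Finset.range (n + 1), (-1:ℝ) ^ k * (n.choose k : ℝ) * x ^ k / (Nat.factorial k : ℝ) := by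
      rw [Finset.sum_range_succ (fun k => (-1:ℝ) ^ k * (n.choose k : ℝ) * x ^ k / (Nat.factorial k : ℝ)) (n+1)]
      simp [Nat.choose_succ_self]
    rw [← h1, ← Finset.sum_add_distrib]
    apply Finset.sum_congr rfl
    intro k hk
    rw [Finset.mem_range] at hk
    have hc : ((n+1).choose k : ℝ) = (n.choose k : ℝ) + (n.choose (n + 1 - k) : ℝ) := by
      rcases Nat.eq_zero_or_pos k with h0 | hpos
      · subst h0; simp [Nat.choose_succ_self]
      · have hk1 : k - 1 ≤ n := by omega
        have : n.choose (n + 1 - k) = n.choose (k - 1) := by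
          rw [← Nat.choose_symm hk1]
          congr 1; omega
        rw [this]
        have hs : (n+1).choose k = n.choose k + n.choose (k-1) := by
          obtain ⟨m, rfl⟩ := Nat.exists_eq_add_of_lt hpos
          simp [Nat.choose_succ_succ, Nat.add_comm]
        push_cast [hs]; ring
    rw [hc]; ring

lemma ratio_tendsto_one (β : ℝ) :
    Tendsto (fun z : ℝ => z / (z - β ^ 2)) atBot (nhds 1) := by
  have h0 : Tendsto (fun z : ℝ => z - β ^ 2) atBot atBot :=
    tendsto_atBot_add_const_right _ _ tendsto_id
  have h0' : Tendsto (fun z : ℝ => -(z - β ^ 2)) atBot atTop :=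
    tendsto_neg_atBot_atTop.comp h0
  have h1 : Tendsto (fun z : ℝ => β ^ 2 / (z - β ^ 2)) atBot (nhds 0) := by
    have := h0'.inv_tendsto_atTop.const_mul (-β ^ 2)
    convert this using 2 with z
    · simp only [Pi.inv_apply, div_eq_mul_inv]
      rcases eq_or_ne z (β^2) with h|h
      · simp [h]
      · have h' : z - β^2 ≠ 0 := sub_ne_zero.mpr h
        rw [← neg_inv]
        ring
    · simp
  have h2 : Tendsto (fun z : ℝ => 1 + β ^ 2 / (z - β ^ 2)) atBot (nhds 1) := by
    simpa using tendsto_const_nhds.add h1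
  apply h2.congr'
  filter_upwards [eventually_lt_atBot (0:ℝ)] with z hz
  have hne : z - β ^ 2 ≠ 0 := by nlinarith [sq_nonneg β]
  field_simp
  ring

/-- The limiting value of the amplification factor
`φ_P(z) = ∑_{p=0}^P L_p^{(-1)}(β²) (z/(z-β²))^p` as real `z → -∞` is `L_P(β²)`. -/
theorem amplification_factor_limit (β : ℝ) (hβ : 0 < β) (P : ℕ) :
    Filter.Tendsto
      (fun z : ℝ => ∑ p ∈ Finset.range (P + 1),
        laguerreM1 p (β ^ 2) * (z / (z - β ^ 2)) ^ p)
      Filter.atBot (nhds (laguerre P (β ^ 2))) := by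
  have hc : Continuous (fun w : ℝ => ∑ p ∈ Finset.range (P + 1), laguerreM1 p (β ^ 2) * w ^ p) := by
    continuity
  have h := (hc.tendsto 1).comp (ratio_tendsto_one β)
  simp only [Function.comp_def, one_pow, mul_one] at h
  rwa [sum_laguerreM1] at h
end

section
/- Let P ≥ 1 be a natural number and suppose β > 0 is chosen so that β² is a root of the Laguerre polynomial L_P, i.e. L_P(β²) = 0. Then the order-P amplification factor φ_P(z) = ∑_{p=0}^{P} L_p^{(−1)}(β²) (z/(z−β²))^p exhibits stiff decay: φ_P(z) → 0 as real z → −∞. Moreover the scheme is consistent of order P: φ_P(z) − e^{z} = O(z^{P+1}) as z → 0. -/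
open Real Finset Filter Asymptotics

lemma hock (n s : ℕ) : ∑ i ∈ range (n+1), i.choose s = (n+1).choose (s+1) := by
  rcases le_or_gt s n with h | h
  · rw [← Nat.sum_Icc_choose n s]
    exact (Finset.sum_subset (by intro q hq; simp only [mem_Icc, mem_range] at *; omega)
      (by intro q hq hq'; simp only [mem_Icc, mem_range] at *
          exact Nat.choose_eq_zero_of_lt (by omega))).symm
  · rw [Nat.choose_eq_zero_of_lt (by omega)]
    apply Finset.sum_eq_zero
    intro i hi; simp only [mem_range] at hi
    exact Nat.choose_eq_zero_of_lt (by omega)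

lemma vand (n : ℕ) : ∀ r s : ℕ,
    ∑ j ∈ range (n+1), j.choose r * (n-j).choose s = (n+1).choose (r+s+1) := by
  induction n with
  | zero =>
    intro r s
    match r, s with
    | 0, 0 => simp
    | 0, s+1 => simp [Nat.choose_eq_zero_of_lt]
    | r+1, s => simp [Nat.choose_eq_zero_of_lt, Nat.choose_eq_zero_of_lt (show 1 < r+s+2 by omega)]
  | succ n ih =>
    intro r s
    match r with
    | 0 =>
      simp only [Nat.choose_zero_right, one_mul, zero_add]
      calc ∑ j ∈ range (n+2), (n+1-j).choose s
          = ∑ j ∈ range (n+2), ((n+2)-1-j).choose s := by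
            apply Finset.sum_congr rfl; intro j hj; congr 1
        _ = ∑ j ∈ range (n+2), j.choose s := Finset.sum_range_reflect (fun j => j.choose s) (n+2)
        _ = (n+2).choose (s+1) := hock (n+1) s
    | r+1 =>
      rw [Finset.sum_range_succ']
      have h0 : (0:ℕ).choose (r+1) * ((n+1-0).choose s) = 0 := by simp
      rw [h0, add_zero]
      have hterm : ∀ i, (i+1).choose (r+1) * ((n+1-(i+1)).choose s)
          = i.choose r * ((n-i).choose s) + i.choose (r+1) * ((n-i).choose s) := by
        intro i
        rw [Nat.choose_succ_succ, add_mul]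
        congr 2 <;> · congr 1; omega
      rw [Finset.sum_congr rfl fun i _ => hterm i, Finset.sum_add_distrib, ih r s, ih (r+1) s,
        show r+1+s+1 = (r+s+1)+1 by omega, Nat.choose_succ_succ (n+1) (r+s+1)]

lemma inner_nat (P m j : ℕ) (h1 : j+1 ≤ m) (h2 : m ≤ P) :
    ∑ q ∈ Finset.Ico j m, q.choose (q-j) * ((P-1-q).choose (m-1-q)) = P.choose (m-j-1) := by
  have hP : 1 ≤ P := by omega
  have step1 : ∑ q ∈ Finset.Ico j m, q.choose (q-j) * ((P-1-q).choose (m-1-q))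
      = ∑ q ∈ Finset.Ico j m, q.choose j * ((P-1-q).choose (P-m)) := by
    apply Finset.sum_congr rfl
    intro q hq; simp only [Finset.mem_Ico] at hq
    congr 1
    · rw [← Nat.choose_symm (show j ≤ q by omega)]
    · rw [show m-1-q = (P-1-q) - (P-m) by omega]
      rw [Nat.choose_symm (by omega)]
  rw [step1]
  have step2 : ∑ q ∈ Finset.Ico j m, q.choose j * ((P-1-q).choose (P-m))
      = ∑ q ∈ range ((P-1)+1), q.choose j * (((P-1)-q).choose (P-m)) := by
    apply Finset.sum_subset
    · intro q hq; simp only [Finset.mem_Ico, mem_range] at *; omega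
    · intro q hq hq'; simp only [Finset.mem_Ico, mem_range] at *
      rcases Nat.lt_or_ge q j with h | h
      · rw [Nat.choose_eq_zero_of_lt h, zero_mul]
      · rw [Nat.choose_eq_zero_of_lt (show P-1-q < P-m by omega), mul_zero]
  have step3 : ∀ q, q.choose j * ((P-1-q).choose (P-m)) = q.choose j * (((P-1)-q).choose (P-m)) := fun q => rfl
  rw [step2, vand (P-1) j (P-m)]
  rw [show (P-1)+1 = P by omega, show j+(P-m)+1 = P - (m-j-1) by omega]
  exact Nat.choose_symm (by omega)

lemma key (P m : ℕ) (hm : m ≤ P) (x : ℝ) :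
    ∑ p ∈ range (m+1), laguerreM1 p x * ((P-p).choose (m-p) : ℝ)
      = ∑ k ∈ range (m+1), (-1)^k * x^k / (Nat.factorial k : ℝ) * (P.choose (m-k) : ℝ) := by
  rw [Finset.sum_range_succ', Finset.sum_range_succ']
  congr 1
  · -- main sums over range m
    have expand : ∀ q, laguerreM1 (q+1) x * (((P-(q+1)).choose (m-(q+1))) : ℝ)
        = ∑ k ∈ range (q+2),
            (-1)^k * x^k / (Nat.factorial k : ℝ)
              * ((q.choose (q+1-k) * ((P-1-q).choose (m-1-q)) : ℕ) : ℝ) := by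
      intro q
      show (∑ k ∈ Finset.range (q + 2),
        (-1) ^ k * (q.choose (q + 1 - k) : ℝ) * x ^ k / (Nat.factorial k : ℝ)) * _ = _
      rw [Finset.sum_mul]
      apply Finset.sum_congr rfl
      intro k hk
      push_cast
      rw [show P-(q+1) = P-1-q by omega, show m-(q+1) = m-1-q by omega]
      ring
    rw [Finset.sum_congr rfl fun q _ => expand q]
    rw [Finset.sum_comm' (t' := range (m+1)) (s' := fun k => Finset.Ico (k-1) m)
      (by intro q k; simp only [mem_range, Finset.mem_Ico]; omega)]
    rw [Finset.sum_range_succ']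
    have hz : (∑ q ∈ Finset.Ico (0-1) m,
        (-1)^0 * x^0 / ((Nat.factorial 0 : ℕ) : ℝ)
          * ((q.choose (q+1-0) * ((P-1-q).choose (m-1-q)) : ℕ) : ℝ)) = 0 := by
      apply Finset.sum_eq_zero
      intro q hq
      rw [Nat.choose_eq_zero_of_lt (show q < q+1-0 by omega)]
      simp
    rw [hz, add_zero]
    apply Finset.sum_congr rfl
    intro j hj
    simp only [mem_range] at hj
    have col : (∑ q ∈ Finset.Ico (j+1-1) m,
        (-1)^(j+1) * x^(j+1) / ((Nat.factorial (j+1) : ℕ) : ℝ)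
          * ((q.choose (q+1-(j+1)) * ((P-1-q).choose (m-1-q)) : ℕ) : ℝ))
        = (-1)^(j+1) * x^(j+1) / ((Nat.factorial (j+1) : ℕ) : ℝ)
          * ((∑ q ∈ Finset.Ico j m, q.choose (q-j) * ((P-1-q).choose (m-1-q)) : ℕ) : ℝ) := by
      rw [Nat.cast_sum, Finset.mul_sum]
      apply Finset.sum_congr (by congr 1)
      intro q hq
      rw [show q+1-(j+1) = q-j by omega]
    rw [col, inner_nat P m j (by omega) hm, show m-j-1 = m-(j+1) by omega]
  · simp [laguerreM1]

lemma coeffA (x : ℝ) (P m : ℕ) (hm : m ≤ P) :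
    (∑ p ∈ range (P+1), Polynomial.C (laguerreM1 p x) *
      ((Polynomial.X + Polynomial.C (-x))^(P-p) * Polynomial.X^p)).coeff m
    = (-x)^(P-m) * ∑ p ∈ range (m+1), laguerreM1 p x * ((P-p).choose (m-p) : ℝ) := by
  rw [Polynomial.finset_sum_coeff]
  have term : ∀ p, (Polynomial.C (laguerreM1 p x) *
      ((Polynomial.X + Polynomial.C (-x))^(P-p) * Polynomial.X^p)).coeff m
      = if p ≤ m then laguerreM1 p x * ((-x)^((P-p)-(m-p)) * ((P-p).choose (m-p) : ℝ)) else 0 := by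
    intro p
    rw [Polynomial.coeff_C_mul, Polynomial.coeff_mul_X_pow']
    split_ifs with h
    · rw [Polynomial.coeff_X_add_C_pow]
    · rw [mul_zero]
  rw [Finset.sum_congr rfl fun p _ => term p, Finset.mul_sum]
  rw [← Finset.sum_subset (Finset.range_subset_range.mpr (by omega : m+1 ≤ P+1))
    (by intro p hp hp'; simp only [mem_range] at hp hp'; rw [if_neg (by omega)])]
  apply Finset.sum_congr rfl
  intro p hp
  simp only [mem_range] at hp
  rw [if_pos (by omega), show (P-p)-(m-p) = P-m by omega]
  ring

lemma coeffB (x : ℝ) (P m : ℕ) (hm : m ≤ P) :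
    (∑ n ∈ range (P+1), Polynomial.C ((Nat.factorial n : ℝ)⁻¹) *
      ((Polynomial.X + Polynomial.C (-x))^P * Polynomial.X^n)).coeff m
    = (-x)^(P-m) * ∑ k ∈ range (m+1), (-1)^k * x^k / (Nat.factorial k : ℝ) * (P.choose (m-k) : ℝ) := by
  rw [Polynomial.finset_sum_coeff]
  have term : ∀ n, (Polynomial.C ((Nat.factorial n : ℝ)⁻¹) *
      ((Polynomial.X + Polynomial.C (-x))^P * Polynomial.X^n)).coeff m
      = if n ≤ m then (Nat.factorial n : ℝ)⁻¹ * ((-x)^(P-(m-n)) * (P.choose (m-n) : ℝ)) else 0 := by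
    intro n
    rw [Polynomial.coeff_C_mul, Polynomial.coeff_mul_X_pow']
    split_ifs with h
    · rw [Polynomial.coeff_X_add_C_pow]
    · rw [mul_zero]
  rw [Finset.sum_congr rfl fun n _ => term n, Finset.mul_sum]
  rw [← Finset.sum_subset (Finset.range_subset_range.mpr (by omega : m+1 ≤ P+1))
    (by intro n hn hn'; simp only [mem_range] at hn hn'; rw [if_neg (by omega)])]
  apply Finset.sum_congr rfl
  intro n hn
  simp only [mem_range] at hn
  rw [if_pos (by omega), show P-(m-n) = (P-m)+n by omega, pow_add, neg_pow x n]
  field_simp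

lemma order_part (P : ℕ) (x : ℝ) (hx : 0 < x) :
    (fun z : ℝ => (∑ p ∈ range (P+1), laguerreM1 p x * (z/(z-x))^p) - Real.exp z)
      =O[nhds 0] fun z : ℝ => z^(P+1) := by
  set A : Polynomial ℝ := ∑ p ∈ range (P+1), Polynomial.C (laguerreM1 p x) *
      ((Polynomial.X + Polynomial.C (-x))^(P-p) * Polynomial.X^p) with hA
  set B : Polynomial ℝ := ∑ n ∈ range (P+1), Polynomial.C ((Nat.factorial n : ℝ)⁻¹) *
      ((Polynomial.X + Polynomial.C (-x))^P * Polynomial.X^n) with hB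
  have hdvd : (Polynomial.X : Polynomial ℝ)^(P+1) ∣ (A - B) := by
    rw [Polynomial.X_pow_dvd_iff]
    intro d hd
    rw [Polynomial.coeff_sub, hA, hB, coeffA x P d (by omega), coeffB x P d (by omega), key P d (by omega) x, sub_self]
  obtain ⟨Q, hQ⟩ := hdvd
  have hev : (fun z : ℝ => (∑ p ∈ range (P+1), laguerreM1 p x * (z/(z-x))^p)
        - (∑ n ∈ range (P+1), z^n / (Nat.factorial n : ℝ)))
      =ᶠ[nhds 0] (fun z : ℝ => (Q.eval z / (z-x)^P) * z^(P+1)) := by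
    filter_upwards [eventually_ne_nhds hx.ne] with z hz
    have hzx : z - x ≠ 0 := sub_ne_zero.mpr hz
    have hpow : (z-x)^P ≠ 0 := pow_ne_zero _ hzx
    have e1 : A.eval z = (∑ p ∈ range (P+1), laguerreM1 p x * (z/(z-x))^p) * (z-x)^P := by
      rw [hA, Polynomial.eval_finset_sum, Finset.sum_mul]
      apply Finset.sum_congr rfl
      intro p hp
      simp only [mem_range] at hp
      simp only [Polynomial.eval_mul, Polynomial.eval_pow, Polynomial.eval_add,
        Polynomial.eval_X, Polynomial.eval_C]
      rw [show z + -x = z - x by ring, div_pow,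
        show (z-x)^P = (z-x)^p * (z-x)^(P-p) by rw [← pow_add]; congr 1; omega]
      field_simp
    have e2 : B.eval z = (∑ n ∈ range (P+1), z^n / (Nat.factorial n : ℝ)) * (z-x)^P := by
      rw [hB, Polynomial.eval_finset_sum, Finset.sum_mul]
      apply Finset.sum_congr rfl
      intro n _
      simp only [Polynomial.eval_mul, Polynomial.eval_pow, Polynomial.eval_add,
        Polynomial.eval_X, Polynomial.eval_C]
      rw [show z + -x = z - x by ring]
      ring
    have e3 : ((∑ p ∈ range (P+1), laguerreM1 p x * (z/(z-x))^p)
        - (∑ n ∈ range (P+1), z^n / (Nat.factorial n : ℝ))) * (z-x)^P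
        = z^(P+1) * Q.eval z := by
      rw [sub_mul, ← e1, ← e2, ← Polynomial.eval_sub, hQ]
      simp [Polynomial.eval_mul, Polynomial.eval_pow]
    rw [div_mul_eq_mul_div, eq_div_iff hpow, e3]
    ring
  have hzero : ((0:ℝ)-x)^P ≠ 0 := pow_ne_zero _ (by rw [zero_sub, neg_ne_zero]; exact hx.ne')
  have hg : Filter.Tendsto (fun z : ℝ => Q.eval z / (z-x)^P) (nhds 0)
      (nhds (Q.eval 0 / ((0:ℝ)-x)^P)) := by
    exact (Q.continuous.tendsto 0).div
      (((continuous_id.sub continuous_const).pow P).tendsto 0) hzero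
  have hO1 : (fun z : ℝ => Q.eval z / (z-x)^P) =O[nhds 0] (fun _ : ℝ => (1:ℝ)) :=
    hg.isBigO_one ℝ
  have h2 : (fun z : ℝ => (∑ p ∈ range (P+1), laguerreM1 p x * (z/(z-x))^p)
      - (∑ n ∈ range (P+1), z^n / (Nat.factorial n : ℝ))) =O[nhds 0] fun z : ℝ => z^(P+1) := by
    refine IsBigO.congr' ?_ hev.symm EventuallyEq.rfl
    simpa using hO1.mul (isBigO_refl (fun z : ℝ => z^(P+1)) (nhds 0))
  have h1 : (fun z : ℝ => (∑ n ∈ range (P+1), z^n / (Nat.factorial n : ℝ)) - Real.exp z)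
      =O[nhds 0] fun z : ℝ => z^(P+1) := by
    rw [isBigO_iff]
    refine ⟨((P+1).succ : ℝ) / ((Nat.factorial (P+1) : ℝ) * ((P+1 : ℕ) : ℝ)), ?_⟩
    filter_upwards [Metric.closedBall_mem_nhds (0:ℝ) one_pos] with z hz
    rw [Metric.mem_closedBall, Real.dist_eq, sub_zero] at hz
    have hb := Real.exp_bound (n := P+1) hz (Nat.succ_pos P)
    rw [Real.norm_eq_abs, Real.norm_eq_abs, abs_pow, abs_sub_comm]
    calc |Real.exp z - ∑ n ∈ range (P+1), z^n / (Nat.factorial n : ℝ)|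
        ≤ |z|^(P+1) * (((P+1).succ : ℝ) / ((Nat.factorial (P+1) : ℝ) * ((P+1 : ℕ) : ℝ))) := by
          convert hb using 3 <;> push_cast <;> ring
      _ = ((P+1).succ : ℝ) / ((Nat.factorial (P+1) : ℝ) * ((P+1 : ℕ) : ℝ)) * |z|^(P+1) := by ring
  have : (fun z : ℝ => (∑ p ∈ range (P+1), laguerreM1 p x * (z/(z-x))^p) - Real.exp z)
      = fun z : ℝ => ((∑ p ∈ range (P+1), laguerreM1 p x * (z/(z-x))^p)
          - (∑ n ∈ range (P+1), z^n / (Nat.factorial n : ℝ)))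
        + ((∑ n ∈ range (P+1), z^n / (Nat.factorial n : ℝ)) - Real.exp z) := by
    funext z; ring
  rw [this]
  exact h2.add h1

lemma decay_part (P : ℕ) (x : ℝ) (hx : 0 < x) (hroot : laguerre P x = 0) :
    Filter.Tendsto (fun z : ℝ => ∑ p ∈ Finset.range (P + 1),
      laguerreM1 p x * (z / (z - x)) ^ p) Filter.atBot (nhds 0) := by
  have hsum1 : (∑ p ∈ range (P+1), laguerreM1 p x * (1:ℝ)^p) = 0 := by
    have hk := key P P le_rfl x
    have l1 : ∑ p ∈ range (P+1), laguerreM1 p x * ((P-p).choose (P-p) : ℝ)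
        = ∑ p ∈ range (P+1), laguerreM1 p x * (1:ℝ)^p := by
      apply Finset.sum_congr rfl; intro p _; rw [Nat.choose_self]; norm_num
    have l2 : ∑ k ∈ range (P+1), (-1:ℝ)^k * x^k / (Nat.factorial k : ℝ) * (P.choose (P-k) : ℝ)
        = laguerre P x := by
      unfold laguerre
      apply Finset.sum_congr rfl; intro k hk'
      simp only [mem_range] at hk'
      rw [Nat.choose_symm (by omega)]
      ring
    rw [← l1, hk, l2, hroot]
  have hd : Filter.Tendsto (fun z : ℝ => z / (z - x)) Filter.atBot (nhds 1) := by
    have h1 : Filter.Tendsto (fun z : ℝ => z - x) Filter.atBot Filter.atBot := by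
      simpa [sub_eq_add_neg] using tendsto_atBot_add_const_right Filter.atBot (-x)
        (tendsto_id (α := ℝ))
    have hneg : Filter.Tendsto (fun z : ℝ => -(z - x)) Filter.atBot Filter.atTop :=
      tendsto_neg_atBot_atTop.comp h1
    have h2 : Filter.Tendsto (fun z : ℝ => (z - x)⁻¹) Filter.atBot (nhds 0) := by
      have h2' := (tendsto_inv_atTop_zero.comp hneg).neg
      simp only [Function.comp_def, inv_neg, neg_neg, neg_zero] at h2'
      exact h2'
    have h3 : Filter.Tendsto (fun z : ℝ => 1 + x * (z - x)⁻¹) Filter.atBot (nhds 1) := by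
      simpa using tendsto_const_nhds.add (h2.const_mul x)
    apply h3.congr'
    filter_upwards [eventually_lt_atBot x] with z hz
    have hzx : z - x ≠ 0 := sub_ne_zero.mpr (ne_of_lt hz)
    field_simp
    ring
  have hg : Continuous (fun t : ℝ => ∑ p ∈ range (P+1), laguerreM1 p x * t^p) :=
    continuous_finset_sum _ fun p _ => continuous_const.mul (continuous_pow p)
  have := (hg.tendsto 1).comp hd
  rw [hsum1] at this
  exact this.congr (fun z => rfl)


/-- If `β²` is a root of the Laguerre polynomial `L_P`, then the order-`P`
amplification factor exhibits stiff decay (`φ_P(z) → 0` as real `z → -∞`) and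
is consistent of order `P` (`φ_P(z) - e^z = O(z^{P+1})` as `z → 0`). -/
theorem stiff_decay_and_order_P (P : ℕ) (hP : 1 ≤ P) (β : ℝ) (hβ : 0 < β)
    (hroot : laguerre P (β ^ 2) = 0) :
    Filter.Tendsto
      (fun z : ℝ => ∑ p ∈ Finset.range (P + 1),
        laguerreM1 p (β ^ 2) * (z / (z - β ^ 2)) ^ p)
      Filter.atBot (nhds 0) ∧
    (fun z : ℝ => (∑ p ∈ Finset.range (P + 1),
        laguerreM1 p (β ^ 2) * (z / (z - β ^ 2)) ^ p) - Real.exp z)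
      =O[nhds 0] fun z : ℝ => z ^ (P + 1) := by
  constructor
  · exact decay_part P (β ^ 2) (by positivity) hroot
  · exact order_part P (β ^ 2) (by positivity)
end

section
/- Let P ≥ 1 be a natural number and suppose β > 0 is chosen so that L_{P+1}^{(−1)}(β²) = 0 (equivalently, β² is a root of the derivative L_{P+1}' of the Laguerre polynomial of degree P+1). Then the order-P amplification factor φ_P(z) = ∑_{p=0}^{P} L_p^{(−1)}(β²) (z/(z−β²))^p achieves one extra order of accuracy: φ_P(z) − e^{z} = O(z^{P+2}) as z → 0. -/
open Real Finset Filter Asymptotics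

lemma laguerreM1_eq (p : ℕ) (x : ℝ) :
    laguerreM1 p x = ∑ k ∈ Finset.range (p + 1),
      (-1) ^ k * ((p - 1).choose (p - k) : ℝ) * x ^ k / (Nat.factorial k : ℝ) := by
  cases p with
  | zero => simp [laguerreM1]
  | succ n => rfl

lemma choose_le_two_pow' (n k : ℕ) : n.choose k ≤ 2 ^ n := by
  rcases le_or_gt k n with h | h
  · calc n.choose k ≤ ∑ m ∈ Finset.range (n + 1), n.choose m :=
        Finset.single_le_sum (fun m _ => Nat.zero_le _) (Finset.mem_range.2 (by omega))
    _ = 2 ^ n := Nat.sum_range_choose n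
  · simp [Nat.choose_eq_zero_of_lt h]

lemma laguerreM1_abs_le (p : ℕ) {b : ℝ} (hb : 0 ≤ b) :
    |laguerreM1 p b| ≤ 2 ^ p * Real.exp b := by
  rw [laguerreM1_eq]
  calc |∑ k ∈ Finset.range (p + 1),
      (-1) ^ k * ((p - 1).choose (p - k) : ℝ) * b ^ k / (Nat.factorial k : ℝ)|
      ≤ ∑ k ∈ Finset.range (p + 1),
        |(-1) ^ k * ((p - 1).choose (p - k) : ℝ) * b ^ k / (Nat.factorial k : ℝ)| :=
        Finset.abs_sum_le_sum_abs _ _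
    _ ≤ ∑ k ∈ Finset.range (p + 1), 2 ^ p * (b ^ k / (Nat.factorial k : ℝ)) := by
        refine Finset.sum_le_sum fun k _ => ?_
        have h1 : (((p - 1).choose (p - k) : ℕ) : ℝ) ≤ 2 ^ p := by
          have h0 := choose_le_two_pow' (p - 1) (p - k)
          have h2 : (2 : ℕ) ^ (p - 1) ≤ 2 ^ p := Nat.pow_le_pow_right (by norm_num) (by omega)
          calc (((p - 1).choose (p - k) : ℕ) : ℝ) ≤ ((2 ^ p : ℕ) : ℝ) := by
                exact_mod_cast h0.trans h2
            _ = 2 ^ p := by push_cast; ring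
        rw [abs_div, abs_mul, abs_mul, abs_pow, abs_neg, abs_one, one_pow, one_mul,
          abs_pow, abs_of_nonneg hb, Nat.abs_cast, Nat.abs_cast, mul_div_assoc]
        exact mul_le_mul_of_nonneg_right h1 (by positivity)
    _ = 2 ^ p * ∑ k ∈ Finset.range (p + 1), b ^ k / (Nat.factorial k : ℝ) := by
        rw [Finset.mul_sum]
    _ ≤ 2 ^ p * Real.exp b := by
        gcongr
        exact Real.sum_le_exp_of_nonneg hb _

set_option maxHeartbeats 1600000 in
lemma laguerreM1_hasSum {b t : ℝ} (hb : 0 < b) (ht : |t| < 1 / 3) :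
    HasSum (fun p => laguerreM1 p b * t ^ p) (Real.exp (b * t / (t - 1))) := by
  have h1t : (1 : ℝ) - t ≠ 0 := by
    intro h
    have : (1 : ℝ) = t := by linarith
    rw [← this] at ht; norm_num at ht
  set A : ℕ × ℕ → ℝ := fun q =>
    (if q.1 ≤ q.2 then (((q.2 - 1).choose (q.2 - q.1) : ℕ) : ℝ) else 0)
      * (-b) ^ q.1 / (Nat.factorial q.1 : ℝ) * t ^ q.2 with hA_def
  -- summability
  have habs : ∀ q : ℕ × ℕ, ‖A q‖ ≤ (b ^ q.1 / (Nat.factorial q.1 : ℝ)) * (2 * |t|) ^ q.2 := by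
    rintro ⟨k, p⟩
    have hc : |if k ≤ p then (((p - 1).choose (p - k) : ℕ) : ℝ) else 0| ≤ 2 ^ p := by
      split
      · rw [Nat.abs_cast]
        have h0 := choose_le_two_pow' (p - 1) (p - k)
        have h2 : (2 : ℕ) ^ (p - 1) ≤ 2 ^ p := Nat.pow_le_pow_right (by norm_num) (by omega)
        calc (((p - 1).choose (p - k) : ℕ) : ℝ) ≤ ((2 ^ p : ℕ) : ℝ) := by
              exact_mod_cast h0.trans h2
          _ = 2 ^ p := by push_cast; ring
      · simp
    have e1 : ‖A (k, p)‖ = |if k ≤ p then (((p - 1).choose (p - k) : ℕ) : ℝ) else 0|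
        * (b ^ k / (Nat.factorial k : ℝ)) * |t| ^ p := by
      simp only [hA_def, Real.norm_eq_abs]
      rw [abs_mul, abs_div, abs_mul, abs_pow, abs_neg, abs_of_pos hb, abs_pow, Nat.abs_cast]
      ring
    rw [e1]
    have step : |if k ≤ p then (((p - 1).choose (p - k) : ℕ) : ℝ) else 0|
        * (b ^ k / (Nat.factorial k : ℝ)) * |t| ^ p
        ≤ 2 ^ p * (b ^ k / (Nat.factorial k : ℝ)) * |t| ^ p :=
      mul_le_mul_of_nonneg_right (mul_le_mul_of_nonneg_right hc (by positivity)) (by positivity)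
    refine step.trans (le_of_eq ?_)
    rw [mul_pow]
    ring
  have hgeo : Summable (fun p : ℕ => (2 * |t|) ^ p) :=
    summable_geometric_of_lt_one (by positivity) (by linarith [ht])
  have hB : Summable (fun q : ℕ × ℕ => (b ^ q.1 / (Nat.factorial q.1 : ℝ)) * (2 * |t|) ^ q.2) :=
    Summable.mul_of_nonneg (Real.summable_pow_div_factorial b) hgeo
      (fun k => by positivity) (fun p => by positivity)
  have hA : Summable A := Summable.of_norm_bounded hB habs
  set a : ℝ := ∑' q, A q with ha_def
  have hAsum : HasSum A a := hA.hasSum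
  -- fibers over k
  set x : ℝ := (-b) * t / (1 - t) with hx_def
  have hfib_k : ∀ k : ℕ, HasSum (fun p => A (k, p)) (x ^ k / (Nat.factorial k : ℝ)) := by
    intro k
    cases k with
    | zero =>
      have hz : ∀ p : ℕ, p ≠ 0 → A (0, p) = 0 := by
        intro p hp
        simp only [hA_def]
        rcases Nat.exists_eq_succ_of_ne_zero hp with ⟨m, rfl⟩
        rw [if_pos (Nat.zero_le _)]
        simp [Nat.choose_eq_zero_of_lt (by omega : m + 1 - 1 < m + 1 - 0)]
      have := hasSum_single (f := fun p => A (0, p)) 0 (fun b hb => hz b hb)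
      convert this using 1
      simp [hA_def]
    | succ j =>
      have hbase := hasSum_choose_mul_geometric_of_norm_lt_one (𝕜 := ℝ) j
        (r := t) (by rw [Real.norm_eq_abs]; linarith)
      have hmul := hbase.mul_left ((-b) ^ (j + 1) / (Nat.factorial (j + 1) : ℝ) * t ^ (j + 1))
      have hshift : HasSum (fun n => A (j + 1, n + (j + 1)))
          ((-b) ^ (j + 1) / (Nat.factorial (j + 1) : ℝ) * t ^ (j + 1) * (1 / (1 - t) ^ (j + 1))) := by
        refine hmul.congr_fun fun n => ?_
        simp only [hA_def]
        rw [if_pos (by omega : j + 1 ≤ n + (j + 1))]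
        have h1 : n + (j + 1) - 1 = n + j := by omega
        have h2 : n + (j + 1) - (j + 1) = n := by omega
        rw [h1, h2]
        have hcs : ((n + j).choose n : ℝ) = ((n + j).choose j : ℝ) := by
          congr 1
          rw [← Nat.choose_symm (by omega : j ≤ n + j)]
          congr 1
          omega
        rw [hcs, pow_add]
        ring
      have hzero : ∑ i ∈ Finset.range (j + 1), A (j + 1, i) = 0 := by
        apply Finset.sum_eq_zero
        intro i hi
        simp only [hA_def]
        rw [if_neg (by simp at hi; omega)]
        ring
      have := (hasSum_nat_add_iff (f := fun p => A (j + 1, p)) (j + 1)).1 hshift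
      rw [hzero, add_zero] at this
      convert this using 1
      · rfl
      rw [hx_def]
      rw [div_pow, mul_pow]
      ring
  have hexp : HasSum (fun k => x ^ k / (Nat.factorial k : ℝ)) (Real.exp x) := by
    rw [Real.exp_eq_exp_ℝ]
    exact NormedSpace.expSeries_div_hasSum_exp x
  have hax : a = Real.exp x := (hAsum.prod_fiberwise hfib_k).unique hexp
  -- fibers over p
  have hAsum' : HasSum (fun q : ℕ × ℕ => A (q.2, q.1)) a :=
    ((Equiv.prodComm ℕ ℕ).hasSum_iff).2 hAsum
  have hfib_p : ∀ p : ℕ, HasSum (fun k => A (k, p)) (laguerreM1 p b * t ^ p) := by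
    intro p
    have hz : ∀ k ∉ Finset.range (p + 1), A (k, p) = 0 := by
      intro k hk
      simp only [hA_def]
      rw [if_neg (by simp at hk; omega)]
      ring
    have := hasSum_sum_of_ne_finset_zero (f := fun k => A (k, p)) (L := SummationFilter.unconditional ℕ) hz
    convert this using 1
    rw [laguerreM1_eq, Finset.sum_mul]
    refine Finset.sum_congr rfl fun k hk => ?_
    simp only [hA_def]
    rw [if_pos (by simp at hk; omega), neg_pow]
    ring
  have hmain : HasSum (fun p => laguerreM1 p b * t ^ p) a :=
    hAsum'.prod_fiberwise hfib_p
  rw [hax] at hmain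
  have hxe : b * t / (t - 1) = x := by
    rw [hx_def]
    rw [div_eq_div_iff (by intro h; apply h1t; linarith [sub_eq_zero.1 h]; ) h1t]
    ring
  rw [hxe]
  exact hmain

set_option maxHeartbeats 1600000 in
/-- If `L_{P+1}^{(-1)}(β²) = 0`, then the order-`P` amplification factor achieves one
extra order of accuracy: `φ_P(z) - e^z = O(z^{P+2})` as `z → 0`. -/
theorem maximal_order_of_accuracy (P : ℕ) (hP : 1 ≤ P) (β : ℝ) (hβ : 0 < β)
    (hroot : laguerreM1 (P + 1) (β ^ 2) = 0) :
    (fun z : ℝ => (∑ p ∈ Finset.range (P + 1),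
        laguerreM1 p (β ^ 2) * (z / (z - β ^ 2)) ^ p) - Real.exp z)
      =O[nhds 0] fun z : ℝ => z ^ (P + 2) := by
  set b : ℝ := β ^ 2 with hb_def
  have hb : 0 < b := by positivity
  rw [isBigO_iff]
  refine ⟨3 * (2 ^ (P + 2) * Real.exp b) * (4 / (3 * b)) ^ (P + 2), ?_⟩
  have hev : ∀ᶠ z : ℝ in nhds 0, |z| < b / 4 := by
    filter_upwards [Metric.ball_mem_nhds (0 : ℝ) (show 0 < b / 4 by positivity)] with z hz
    simpa [Real.dist_eq] using hz
  filter_upwards [hev] with z hz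
  set t : ℝ := z / (z - b) with ht_def
  have hzb : z - b ≠ 0 := by
    have h1 := le_abs_self z
    intro h
    nlinarith [abs_nonneg z]
  have habs_zb : 3 * b / 4 ≤ |z - b| := by
    have h1 : z - b < 0 := by have := le_abs_self z; linarith
    rw [abs_of_neg h1]
    have h2 := le_abs_self z
    linarith
  have ht_le : |t| ≤ 4 / (3 * b) * |z| := by
    rw [ht_def, abs_div]
    rw [div_le_iff₀ (lt_of_lt_of_le (by positivity) habs_zb)]
    calc |z| = 4 / (3 * b) * |z| * (3 * b / 4) := by field_simp
      _ ≤ 4 / (3 * b) * |z| * |z - b| :=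
        mul_le_mul_of_nonneg_left habs_zb (by positivity)
  have ht3 : |t| < 1 / 3 := by
    have h1 : 4 / (3 * b) * |z| < 4 / (3 * b) * (b / 4) :=
      mul_lt_mul_of_pos_left hz (by positivity)
    have h2 : 4 / (3 * b) * (b / 4) = 1 / 3 := by field_simp
    linarith [ht_le]
  have hbzb : t - 1 = b / (z - b) := by
    rw [ht_def]
    field_simp
    ring
  have ht1 : t - 1 ≠ 0 := by rw [hbzb]; exact div_ne_zero hb.ne' hzb
  have hzx : b * t / (t - 1) = z := by
    rw [div_eq_iff ht1, hbzb, ht_def]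
    field_simp
  have hsum := laguerreM1_hasSum hb ht3
  rw [hzx] at hsum
  have hpart := Summable.sum_add_tsum_nat_add (f := fun p => laguerreM1 p b * t ^ p) (P + 1) hsum.summable
  have hsummable1 : Summable fun i => laguerreM1 (i + (P + 1)) b * t ^ (i + (P + 1)) :=
    (summable_nat_add_iff (P + 1)).2 hsum.summable
  have htail : ∑' i, laguerreM1 (i + (P + 1)) b * t ^ (i + (P + 1))
      = ∑' i, laguerreM1 (i + (P + 2)) b * t ^ (i + (P + 2)) := by
    rw [Summable.tsum_eq_zero_add hsummable1]
    have e0 : laguerreM1 (0 + (P + 1)) b * t ^ (0 + (P + 1)) = 0 := by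
      rw [zero_add, hroot, zero_mul]
    rw [e0, zero_add]
    congr 1
    funext i
    congr 2 <;> omega
  have key : (∑ p ∈ Finset.range (P + 1), laguerreM1 p b * t ^ p) - Real.exp z
      = -(∑' i, laguerreM1 (i + (P + 2)) b * t ^ (i + (P + 2))) := by
    rw [← hsum.tsum_eq, ← hpart, htail]
    ring
  have hterm : ∀ i, ‖laguerreM1 (i + (P + 2)) b * t ^ (i + (P + 2))‖
      ≤ (2 ^ (P + 2) * Real.exp b * |t| ^ (P + 2)) * (2 * |t|) ^ i := by
    intro i
    rw [Real.norm_eq_abs, abs_mul, abs_pow]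
    calc |laguerreM1 (i + (P + 2)) b| * |t| ^ (i + (P + 2))
        ≤ (2 ^ (i + (P + 2)) * Real.exp b) * |t| ^ (i + (P + 2)) :=
          mul_le_mul_of_nonneg_right (laguerreM1_abs_le _ hb.le) (by positivity)
      _ = (2 ^ (P + 2) * Real.exp b * |t| ^ (P + 2)) * (2 * |t|) ^ i := by
          rw [pow_add, pow_add, mul_pow]
          ring
  have hgeosum : Summable (fun i : ℕ => (2 * |t|) ^ i) :=
    summable_geometric_of_lt_one (by positivity) (by linarith)
  have hsummable_norm : Summable fun i => ‖laguerreM1 (i + (P + 2)) b * t ^ (i + (P + 2))‖ :=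
    Summable.of_nonneg_of_le (fun i => norm_nonneg _) hterm (hgeosum.mul_left _)
  have hinv3 : (1 - 2 * |t|)⁻¹ ≤ 3 := by
    have hpos : (0 : ℝ) < 1 - 2 * |t| := by linarith
    rw [inv_le_iff_one_le_mul₀ hpos]
    linarith
  have hpow : |t| ^ (P + 2) ≤ (4 / (3 * b)) ^ (P + 2) * |z| ^ (P + 2) := by
    rw [← mul_pow]
    exact pow_le_pow_left₀ (abs_nonneg t) ht_le _
  have hnorm : ‖z ^ (P + 2)‖ = |z| ^ (P + 2) := by rw [Real.norm_eq_abs, abs_pow]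
  rw [key, norm_neg, hnorm]
  calc ‖∑' i, laguerreM1 (i + (P + 2)) b * t ^ (i + (P + 2))‖
      ≤ ∑' i, ‖laguerreM1 (i + (P + 2)) b * t ^ (i + (P + 2))‖ :=
        norm_tsum_le_tsum_norm hsummable_norm
    _ ≤ ∑' i, (2 ^ (P + 2) * Real.exp b * |t| ^ (P + 2)) * (2 * |t|) ^ i :=
        Summable.tsum_le_tsum hterm hsummable_norm (hgeosum.mul_left _)
    _ = (2 ^ (P + 2) * Real.exp b * |t| ^ (P + 2)) * (1 - 2 * |t|)⁻¹ := by
        rw [tsum_mul_left, tsum_geometric_of_lt_one (by positivity) (by linarith)]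
    _ ≤ (2 ^ (P + 2) * Real.exp b * |t| ^ (P + 2)) * 3 :=
        mul_le_mul_of_nonneg_left hinv3 (by positivity)
    _ = 3 * (2 ^ (P + 2) * Real.exp b) * |t| ^ (P + 2) := by ring
    _ ≤ 3 * (2 ^ (P + 2) * Real.exp b) * ((4 / (3 * b)) ^ (P + 2) * |z| ^ (P + 2)) :=
        mul_le_mul_of_nonneg_left hpow (by positivity)
    _ = 3 * (2 ^ (P + 2) * Real.exp b) * (4 / (3 * b)) ^ (P + 2) * |z| ^ (P + 2) := by ring
end

section
/- Let β² = 2 − √2 (the smallest root of the Laguerre polynomial L_2(x) = 1 − 2x + x²/2) and define φ_2(z) = 1 − β² d̂(z) − (β² − β⁴/2) d̂(z)² with d̂(z) = z/(z − β²). Then φ_2 is L-stable: |φ_2(i y)| ≤ 1 for every real y, and φ_2(z) → 0 as real z → −∞. -/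
open Real Filter Complex

/-- The order-2 amplification factor with `β² = 2 - √2`, the smallest root of the
Laguerre polynomial `L_2(x) = 1 - 2x + x²/2`:
`φ₂(z) = 1 - β² d̂(z) - (β² - β⁴/2) d̂(z)²`, where `d̂(z) = z/(z - β²)`. -/
noncomputable def phi2 (z : ℂ) : ℂ :=
  let b2 : ℂ := (2 - Real.sqrt 2 : ℝ)
  1 - b2 * (z / (z - b2)) - (b2 - b2 ^ 2 / 2) * (z / (z - b2)) ^ 2

lemma phi2_key (z : ℂ) (hz : z ≠ ((2 - Real.sqrt 2 : ℝ) : ℂ)) :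
    phi2 z = ((2 - Real.sqrt 2 : ℝ) : ℂ) * (((2 - Real.sqrt 2 : ℝ) : ℂ) - (Real.sqrt 2 : ℂ) * z)
      / (z - ((2 - Real.sqrt 2 : ℝ) : ℂ)) ^ 2 := by
  have h2 : ((Real.sqrt 2 : ℝ) : ℂ) ^ 2 = 2 := by
    norm_cast
    rw [Real.sq_sqrt]; norm_num
  unfold phi2
  simp only []
  push_cast
  have hne : z - (2 - (Real.sqrt 2 : ℂ)) ≠ 0 := by
    rw [sub_ne_zero]; intro h; apply hz; rw [h]; push_cast; ring
  field_simp
  set s : ℂ := (Real.sqrt 2 : ℂ)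
  linear_combination (s^3*z^2 + 3*s^2*z^3 - (13/2)*s^2*z^2 + 3*s*z^4 - 13*s*z^3 + 14*s*z^2
    + z^5 - (13/2)*z^4 + 14*z^3 - 10*z^2 + (1/2)*s^2*z^2 + s*z^3 - 2*s*z^2 + (1/2)*z^4 - 2*z^3 + 2*z^2
    + (-s^3*z^2 + s^2*(6*z^2-3*z^3) + s*(-12*z^2+12*z^3-3*z^4) + (9*z^2-12*z^3+6*z^4-z^5))) * h2

/-- The order-2 scheme with `β² = 2 - √2` is L-stable: `|φ₂(iy)| ≤ 1` for all real `y`,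
and `φ₂(z) → 0` as real `z → -∞`. -/
theorem order_two_scheme_L_stable :
    (∀ y : ℝ, ‖phi2 (Complex.I * y)‖ ≤ 1) ∧
    Filter.Tendsto (fun z : ℝ => phi2 (z : ℂ)) Filter.atBot (nhds 0) := by
  have hs2 : Real.sqrt 2 ^ 2 = 2 := Real.sq_sqrt (by norm_num)
  have hslt : Real.sqrt 2 < 2 := by nlinarith [Real.sqrt_nonneg 2]
  have hspos : 0 < Real.sqrt 2 := Real.sqrt_pos.mpr (by norm_num)
  set b : ℝ := 2 - Real.sqrt 2 with hbdef
  have hb : 0 < b := by simp [hbdef]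
  constructor
  · intro y
    have hz : Complex.I * (y : ℂ) ≠ ((b : ℝ) : ℂ) := by
      intro h
      have := congrArg Complex.re h
      simp at this
      linarith
    rw [phi2_key _ hz, Complex.norm_def]
    rw [Real.sqrt_le_one]
    rw [map_div₀, map_mul, map_pow]
    rw [div_le_one]
    · have hre : Complex.normSq ((b:ℂ) - (Real.sqrt 2 : ℂ) * (Complex.I * y)) = b^2 + 2*y^2 := by
        simp [Complex.normSq_apply]
        nlinarith [hs2]
      have hd : Complex.normSq (Complex.I * (y:ℂ) - (b:ℂ)) = y^2 + b^2 := by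
        simp [Complex.normSq_apply]; ring
      rw [hre, hd, Complex.normSq_ofReal, ← hbdef]
      nlinarith [sq_nonneg (y^2)]
    · exact pow_pos (Complex.normSq_pos.mpr (sub_ne_zero.mpr hz)) 2
  · set C : ℝ := b * (b + Real.sqrt 2) with hC
    have hCpos : 0 < C := by positivity
    apply squeeze_zero_norm' (a := fun z : ℝ => C * (-z)⁻¹)
    · filter_upwards [eventually_le_atBot (-1 : ℝ)] with z hz1
      have hzb : (z : ℂ) ≠ ((b : ℝ) : ℂ) := by
        rw [Ne, Complex.ofReal_inj]; intro h; linarith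
      have heq : phi2 (z : ℂ) = ((b * (b - Real.sqrt 2 * z) / (z - b)^2 : ℝ) : ℂ) := by
        rw [phi2_key _ hzb]; simp only [hbdef]; push_cast; ring
      rw [heq, Complex.norm_real, Real.norm_eq_abs]
      have hzneg : z < 0 := by linarith
      have hzb2 : z - b < 0 := by linarith
      have hden : 0 < (z - b)^2 := by rw [pow_two]; exact mul_pos_of_neg_of_neg hzb2 hzb2
      have hnum : 0 ≤ b * (b - Real.sqrt 2 * z) := by nlinarith [mul_pos hspos (neg_pos.mpr hzneg)]
      rw [_root_.abs_of_nonneg (div_nonneg hnum hden.le)]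
      rw [div_le_iff₀ hden, hC]
      have h1 : b - Real.sqrt 2 * z ≤ (b + Real.sqrt 2) * (-z) := by nlinarith
      have h2 : z^2 ≤ (z - b)^2 := by nlinarith
      calc b * (b - Real.sqrt 2 * z) ≤ b * ((b + Real.sqrt 2) * (-z)) := by
            apply mul_le_mul_of_nonneg_left h1 hb.le
        _ = b * (b + Real.sqrt 2) * (-z)⁻¹ * z^2 := by
            field_simp
        _ ≤ b * (b + Real.sqrt 2) * (-z)⁻¹ * (z - b)^2 := by
            apply mul_le_mul_of_nonneg_left h2
            exact mul_nonneg (by positivity) (inv_nonneg.mpr (by linarith))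
    · have h1 : Tendsto (fun z : ℝ => (-z)⁻¹) atBot (nhds 0) :=
        tendsto_inv_atTop_zero.comp tendsto_neg_atBot_atTop
      simpa using h1.const_mul C
end
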